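/- arXiv:1702.08683 — 5 statements merged into one kernel-verified Lean document; each statement's English description precedes it below -/
import Mathlib

section
/- (Brezis–Lieb type pointwise inequality) Let G : ℝ^N → ℝ be convex and even with G(0) = 0. Then for every k > 1, every ε with 0 < ε < 1/k, and all x, y ∈ ℝ^N, one has |G(x + y) − G(x)| ≤ ε|G(kx) − kG(x)| + 2G(C_ε y), where C_ε = 1/(ε(k − 1)). -/
open MeasureTheory Filter Set

noncomputable section

abbrev Euc (N : ℕ) := EuclideanSpace ℝ (Fin N)

/-- Admissible G-function: (G1)-(G6). -/
def IsGFunction {N : ℕ} (G : Euc N → ℝ) : Prop :=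
  G 0 = 0 ∧
  ConvexOn ℝ Set.univ G ∧
  (∀ x, G (-x) = G x) ∧
  (∀ C : ℝ, ∃ R : ℝ, ∀ x : Euc N, R ≤ ‖x‖ → C * ‖x‖ ≤ G x) ∧
  (∃ K₁ : ℝ, 2 ≤ K₁ ∧ ∃ M₁ : ℝ, 0 < M₁ ∧ ∀ x : Euc N, M₁ ≤ ‖x‖ → G ((2:ℝ) • x) ≤ K₁ * G x) ∧
  (∃ K₂ : ℝ, 1 ≤ K₂ ∧ ∃ M₂ : ℝ, 0 < M₂ ∧ ∀ x : Euc N, M₂ ≤ ‖x‖ → G x ≤ (1/(2*K₂)) * G (K₂ • x))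

/-- Membership in the anisotropic Orlicz space L^G(I, ℝ^N). -/
def MemLG {N : ℕ} (G : Euc N → ℝ) (I : Set ℝ) (u : ℝ → Euc N) : Prop :=
  AEStronglyMeasurable u (volume.restrict I) ∧ IntegrableOn (fun t => G (u t)) I

/-- Luxemburg norm. -/
def luxNorm {N : ℕ} (G : Euc N → ℝ) (I : Set ℝ) (u : ℝ → Euc N) : ℝ :=
  sInf {α : ℝ | 0 < α ∧ (∫ t in I, G (α⁻¹ • u t)) ≤ 1}

/-- Modular. -/
def modular {N : ℕ} (G : Euc N → ℝ) (I : Set ℝ) (u : ℝ → Euc N) : ℝ :=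
  ∫ t in I, G (u t)

/-- Fenchel conjugate. -/
def fenchelConj {N : ℕ} (G : Euc N → ℝ) (y : Euc N) : ℝ :=
  ⨆ x : Euc N, ((inner ℝ x y : ℝ) - G x)




lemma G_nonneg' {N : ℕ} (G : Euc N → ℝ) (h0 : G 0 = 0)
    (hconv : ConvexOn ℝ Set.univ G) (heven : ∀ x, G (-x) = G x) (x : Euc N) :
    0 ≤ G x := by
  have h := hconv.2 (mem_univ x) (mem_univ (-x)) (by norm_num : (0:ℝ) ≤ 1/2)
    (by norm_num : (0:ℝ) ≤ 1/2) (by norm_num)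
  have hx : (1/2 : ℝ) • x + (1/2 : ℝ) • (-x) = 0 := by
    simp [smul_neg]
  rw [hx, h0, heven] at h
  simp only [smul_eq_mul] at h
  linarith

lemma G_k_ge' {N : ℕ} (G : Euc N → ℝ) (h0 : G 0 = 0)
    (hconv : ConvexOn ℝ Set.univ G) (k : ℝ) (hk : 1 < k) (x : Euc N) :
    k * G x ≤ G (k • x) := by
  have hk0 : 0 < k := by linarith
  have h := hconv.2 (mem_univ (k • x)) (mem_univ (0 : Euc N))
    (by positivity : (0:ℝ) ≤ 1/k) (by
      have : (1:ℝ)/k ≤ 1 := by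
        rw [div_le_one hk0]; linarith
      linarith : (0:ℝ) ≤ 1 - 1/k) (by ring)
  have hx : (1/k : ℝ) • (k • x) + (1 - 1/k : ℝ) • (0 : Euc N) = x := by
    rw [smul_zero, add_zero, smul_smul, one_div, inv_mul_cancel₀ (ne_of_gt hk0), one_smul]
  rw [hx] at h
  simp only [smul_eq_mul, h0, mul_zero, add_zero] at h
  have := mul_le_mul_of_nonneg_left h (le_of_lt hk0)
  calc k * G x ≤ k * (1/k * G (k • x)) := this
    _ = G (k • x) := by field_simp

lemma key_est' {N : ℕ} (G : Euc N → ℝ) (h0 : G 0 = 0)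
    (hconv : ConvexOn ℝ Set.univ G)
    (k ε : ℝ) (hk : 1 < k) (hε : 0 < ε) (hεk : ε < 1 / k) (x z : Euc N) :
    G (x + z) - G x ≤ ε * (G (k • x) - k * G x)
      + (ε * (k - 1)) * G ((1 / (ε * (k - 1))) • z) := by
  have hk0 : (0:ℝ) < k := by linarith
  set θ : ℝ := ε * (k - 1) with hθdef
  have hθ0 : 0 < θ := by
    have : 0 < k - 1 := by linarith
    positivity
  have hθlt : θ < (k - 1) / k := by
    have h1 : ε * (k-1) < (1/k) * (k-1) := by
      apply mul_lt_mul_of_pos_right hεk; linarith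
    calc θ = ε * (k-1) := hθdef
      _ < (1/k) * (k-1) := h1
      _ = (k-1)/k := by ring
  have h1θ : (0:ℝ) < 1 - θ := by
    have : (k-1)/k < 1 := by
      rw [div_lt_one hk0]; linarith
    linarith
  have step1 : G (x + z) ≤ (1 - θ) * G ((1-θ)⁻¹ • x) + θ * G (θ⁻¹ • z) := by
    have h := hconv.2 (mem_univ ((1-θ)⁻¹ • x)) (mem_univ (θ⁻¹ • z))
      (le_of_lt h1θ) (le_of_lt hθ0) (by ring)
    have hx : (1-θ) • ((1-θ)⁻¹ • x) + θ • (θ⁻¹ • z) = x + z := by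
      rw [smul_smul, smul_smul, mul_inv_cancel₀ (ne_of_gt h1θ),
        mul_inv_cancel₀ (ne_of_gt hθ0), one_smul, one_smul]
    rw [hx] at h
    exact h
  set s : ℝ := (1-θ)⁻¹ with hsdef
  have hs1 : 1 ≤ s := by
    rw [hsdef]
    rw [le_inv_comm₀ one_pos h1θ]
    simp
    linarith
  have hsk : s ≤ k := by
    rw [hsdef, inv_le_comm₀ h1θ hk0]
    have h2 : (k-1)/k = 1 - k⁻¹ := by field_simp
    linarith [hθlt]
  set μ : ℝ := (s - 1) / (k - 1) with hμdef
  have hμ0 : 0 ≤ μ := by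
    apply div_nonneg <;> linarith
  have hμ1 : μ ≤ 1 := by
    rw [hμdef, div_le_one (by linarith : (0:ℝ) < k - 1)]
    linarith
  have step2 : G (s • x) ≤ (1-μ) * G x + μ * G (k • x) := by
    have h := hconv.2 (mem_univ x) (mem_univ (k • x))
      (by linarith : (0:ℝ) ≤ 1-μ) hμ0 (by ring)
    have hk1 : (k:ℝ) - 1 ≠ 0 := by linarith
    have hμk : μ * (k-1) = s - 1 := by
      rw [hμdef]; exact div_mul_cancel₀ _ hk1
    have hx : (1-μ) • x + μ • (k • x) = s • x := by
      rw [smul_smul, ← add_smul]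
      congr 1
      linear_combination hμk
    rw [hx] at h
    simp only [smul_eq_mul] at h
    exact h
  rw [hsdef] at step2
  have hcomb : G (x + z) - G x ≤
      ((1-θ)*(1-μ) - 1) * G x + (1-θ)*μ * G (k • x) + θ * G (θ⁻¹ • z) := by
    nlinarith [step1, mul_le_mul_of_nonneg_left step2 (le_of_lt h1θ)]
  have hk1 : (k:ℝ) - 1 ≠ 0 := by linarith
  have hμk : μ * (k-1) = s - 1 := by
    rw [hμdef]; exact div_mul_cancel₀ _ hk1
  have hss : (1-θ) * s = 1 := by
    rw [hsdef]; exact mul_inv_cancel₀ (ne_of_gt h1θ)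
  have hε' : (1-θ)*μ = ε := by
    apply mul_right_cancel₀ hk1
    have h6 : (1-θ)*μ*(k-1) = θ := by linear_combination (1-θ)*hμk + hss
    linear_combination h6 + hθdef
  have hcoef : ((1-θ)*(1-μ) - 1) = -(θ+ε) := by linear_combination -hε'
  rw [hcoef, hε'] at hcomb
  have hinv : θ⁻¹ = 1/(ε*(k-1)) := by rw [hθdef, one_div]
  rw [hinv] at hcomb
  have h4 : (θ+ε) * G x = ε * k * G x := by
    rw [hθdef]; ring
  have h5 : θ * G ((1/(ε*(k-1))) • z) = ε*(k-1) * G ((1/(ε*(k-1))) • z) := by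
    rw [hθdef]
  linarith [hcomb]

/-- Brezis–Lieb type pointwise inequality. -/
theorem brezis_lieb_pointwise {N : ℕ} (hN : 1 ≤ N) (G : Euc N → ℝ)
    (h0 : G 0 = 0) (hconv : ConvexOn ℝ Set.univ G) (heven : ∀ x, G (-x) = G x)
    (k ε : ℝ) (hk : 1 < k) (hε : 0 < ε) (hεk : ε < 1 / k) (x y : Euc N) :
    |G (x + y) - G x| ≤
      ε * |G (k • x) - k * G x| + 2 * G ((1 / (ε * (k - 1))) • y) := by
  have hk0 : (0:ℝ) < k := by linarith
  have hGpos := G_nonneg' G h0 hconv heven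
  have hD : 0 ≤ G (k • x) - k * G x := by
    have := G_k_ge' G h0 hconv k hk x
    linarith
  have habsD : |G (k • x) - k * G x| = G (k • x) - k * G x := abs_of_nonneg hD
  have hθ1 : ε * (k - 1) ≤ 2 := by
    have h1 : ε * (k-1) < (1/k) * (k-1) := by
      apply mul_lt_mul_of_pos_right hεk; linarith
    have h2 : (1/k) * (k-1) < 1 := by
      rw [div_mul_eq_mul_div, div_lt_one hk0]; linarith
    linarith
  have hCy : 0 ≤ G ((1 / (ε * (k - 1))) • y) := hGpos _
  have hup : G (x + y) - G x ≤
      ε * (G (k • x) - k * G x) + (ε * (k - 1)) * G ((1 / (ε * (k - 1))) • y) :=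
    key_est' G h0 hconv k ε hk hε hεk x y
  have hlow' : G (x + (-y)) - G x ≤
      ε * (G (k • x) - k * G x) + (ε * (k - 1)) * G ((1 / (ε * (k - 1))) • (-y)) :=
    key_est' G h0 hconv k ε hk hε hεk x (-y)
  rw [smul_neg, heven] at hlow'
  -- midpoint convexity: 2 G x ≤ G (x+y) + G (x-y)
  have hmid : 2 * G x ≤ G (x + y) + G (x + (-y)) := by
    have h := hconv.2 (Set.mem_univ (x + y)) (Set.mem_univ (x + (-y)))
      (by norm_num : (0:ℝ) ≤ 1/2) (by norm_num : (0:ℝ) ≤ 1/2) (by norm_num)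
    have hx : (1/2 : ℝ) • (x + y) + (1/2 : ℝ) • (x + (-y)) = x := by
      rw [smul_add, smul_add, smul_neg]
      rw [show ∀ a b c : Euc N, (a + b) + (c + -b) = a + c from fun a b c => by abel]
      rw [← add_smul]
      norm_num
    rw [hx] at h
    simp only [smul_eq_mul] at h
    linarith
  have hmul : (ε * (k - 1)) * G ((1 / (ε * (k - 1))) • y) ≤
      2 * G ((1 / (ε * (k - 1))) • y) := by
    apply mul_le_mul_of_nonneg_right hθ1 hCy
  rw [abs_le]
  constructor
  · -- lower: G x - G (x+y) ≤ G (x + (-y)) - G x ≤ bound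
    rw [habsD]
    have : G x - G (x + y) ≤ G (x + (-y)) - G x := by linarith
    nlinarith [hlow', hmul, mul_nonneg (le_of_lt hε) hD]
  · rw [habsD]
    linarith


end
end

section
/- Let F and G be admissible G-functions on ℝ^N with F ≺≺ G, i.e. for every α > 0, G(αx)/F(x) → ∞ as |x| → ∞, and let I ⊂ ℝ be a bounded nondegenerate interval. If (u_n) ⊂ L^G(I,ℝ^N) is bounded in the Luxemburg norm ‖·‖_G (there is C > 0 with ‖u_n‖_G ≤ C for all n) and (u_n) is Cauchy in measure on I, then (u_n) is a Cauchy sequence for the norm ‖·‖_F, and hence converges in L^F(I,ℝ^N). -/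
open MeasureTheory Filter Set

noncomputable section

namespace GFAux

variable {N : ℕ} {G : Euc N → ℝ}

lemma nonneg (hG : IsGFunction G) (x : Euc N) : 0 ≤ G x := by
  obtain ⟨h0, hc, he, -⟩ := hG
  have h := hc.2 (mem_univ x) (mem_univ (-x)) (by norm_num : (0:ℝ) ≤ 1/2)
    (by norm_num : (0:ℝ) ≤ 1/2) (by norm_num)
  have hx : (1/2 : ℝ) • x + (1/2 : ℝ) • (-x) = 0 := by
    rw [smul_neg]; abel
  rw [hx, h0, he] at h
  simp only [smul_eq_mul] at h
  linarith

lemma continuous (hG : IsGFunction G) : Continuous G := by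
  rw [← continuousOn_univ]
  exact hG.2.1.continuousOn isOpen_univ

lemma smul_le (hG : IsGFunction G) {c : ℝ} (h0 : 0 ≤ c) (h1 : c ≤ 1) (x : Euc N) :
    G (c • x) ≤ c * G x := by
  have h := hG.2.1.2 (mem_univ x) (mem_univ (0 : Euc N)) h0
    (by linarith : (0:ℝ) ≤ 1 - c) (by ring)
  simpa [hG.1] using h

lemma midpoint_le (hG : IsGFunction G) (x y : Euc N) :
    G ((1/2 : ℝ) • x + (1/2 : ℝ) • y) ≤ (1/2) * G x + (1/2) * G y := by
  have h := hG.2.1.2 (mem_univ x) (mem_univ y) (by norm_num : (0:ℝ) ≤ 1/2)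
    (by norm_num : (0:ℝ) ≤ 1/2) (by norm_num)
  simpa using h

lemma bdd (hG : IsGFunction G) (r : ℝ) : ∃ B : ℝ, 0 ≤ B ∧ ∀ x : Euc N, ‖x‖ ≤ r → G x ≤ B := by
  rcases le_or_gt 0 r with hr | hr
  · obtain ⟨x₀, -, hx₀⟩ := (isCompact_closedBall (0 : Euc N) r).exists_isMaxOn
      ⟨0, by simpa using hr⟩ (continuous hG).continuousOn
    refine ⟨max (G x₀) 0, le_max_right _ _, fun x hx => ?_⟩
    exact le_trans (hx₀ (by simpa [Metric.mem_closedBall, dist_eq_norm] using hx)) (le_max_left _ _)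
  · exact ⟨0, le_rfl, fun x hx => absurd ((norm_nonneg x).trans hx) (not_le.mpr hr)⟩

lemma small (hG : IsGFunction G) (η : ℝ) (hη : 0 < η) :
    ∃ δ : ℝ, 0 < δ ∧ ∀ x : Euc N, ‖x‖ ≤ δ → G x ≤ η := by
  have hc : ContinuousAt G 0 := (continuous hG).continuousAt
  rw [Metric.continuousAt_iff] at hc
  obtain ⟨δ, hδ, h⟩ := hc η hη
  refine ⟨δ/2, by linarith, fun x hx => ?_⟩
  have := h (show dist x 0 < δ by rw [dist_eq_norm, sub_zero]; linarith)
  rw [hG.1, dist_eq_norm, sub_zero] at this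
  calc G x ≤ |G x| := le_abs_self _
  _ ≤ η := le_of_lt (by simpa using this)

lemma norm_le (hG : IsGFunction G) : ∃ R : ℝ, 0 ≤ R ∧ ∀ x : Euc N, ‖x‖ ≤ R + G x := by
  obtain ⟨R, hR⟩ := hG.2.2.2.1 1
  refine ⟨max R 0, le_max_right _ _, fun x => ?_⟩
  rcases le_or_gt R ‖x‖ with h | h
  · have := hR x h
    have := nonneg hG x
    have : ‖x‖ ≤ G x := by linarith [hR x h]
    linarith [le_max_right R 0]
  · linarith [le_max_left R 0, nonneg hG x]

lemma pow_two_le (hG : IsGFunction G) {K₁ M₁ : ℝ} (hK₁ : 2 ≤ K₁) (hM₁ : 0 < M₁)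
    (hΔ : ∀ x : Euc N, M₁ ≤ ‖x‖ → G ((2:ℝ) • x) ≤ K₁ * G x) (k : ℕ) :
    ∀ x : Euc N, M₁ ≤ ‖x‖ → G ((2:ℝ)^k • x) ≤ K₁^k * G x := by
  induction k with
  | zero => intro x _; simp
  | succ k ih =>
    intro x hx
    have h1 : ((2:ℝ)^(k+1)) • x = (2:ℝ) • ((2:ℝ)^k • x) := by
      rw [smul_smul]; ring_nf
    have h2 : M₁ ≤ ‖(2:ℝ)^k • x‖ := by
      rw [norm_smul]
      have h2k : (1:ℝ) ≤ (2:ℝ)^k := one_le_pow₀ (by norm_num)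
      calc M₁ ≤ ‖x‖ := hx
      _ = 1 * ‖x‖ := (one_mul _).symm
      _ ≤ ‖(2:ℝ)^k‖ * ‖x‖ := by
          apply mul_le_mul_of_nonneg_right _ (norm_nonneg x)
          rw [Real.norm_eq_abs, abs_of_nonneg (by positivity)]; exact h2k
    calc G ((2:ℝ)^(k+1) • x) = G ((2:ℝ) • ((2:ℝ)^k • x)) := by rw [h1]
    _ ≤ K₁ * G ((2:ℝ)^k • x) := hΔ _ h2
    _ ≤ K₁ * (K₁^k * G x) := by
        apply mul_le_mul_of_nonneg_left (ih x hx) (by linarith)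
    _ = K₁^(k+1) * G x := by ring

lemma growth (hG : IsGFunction G) (c : ℝ) :
    ∃ K B : ℝ, 0 ≤ K ∧ 0 ≤ B ∧ ∀ x : Euc N, G (c • x) ≤ K * G x + B := by
  obtain ⟨K₁, hK₁, M₁, hM₁, hΔ⟩ := hG.2.2.2.2.1
  obtain ⟨k, hk⟩ := pow_unbounded_of_one_lt |c| (by norm_num : (1:ℝ) < 2)
  obtain ⟨B, hB, hBall⟩ := bdd hG ((2:ℝ)^k * M₁)
  refine ⟨K₁^k, B, by positivity, hB, fun x => ?_⟩
  have hcle : G (c • x) ≤ G ((2:ℝ)^k • x) := by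
    have habs : G (c • x) = G (|c| • x) := by
      rcases abs_cases c with ⟨h, -⟩ | ⟨h, -⟩
      · rw [h]
      · rw [h, neg_smul, hG.2.2.1]
    rw [habs]
    have h1 : |c| • x = (|c| / (2:ℝ)^k) • ((2:ℝ)^k • x) := by
      rw [smul_smul, div_mul_cancel₀]; positivity
    rw [h1]
    have h2 : (0:ℝ) ≤ |c| / (2:ℝ)^k := by positivity
    have h3 : |c| / (2:ℝ)^k ≤ 1 := by
      rw [div_le_one (by positivity)]; exact hk.le
    calc G ((|c| / (2:ℝ)^k) • ((2:ℝ)^k • x)) ≤ (|c| / (2:ℝ)^k) * G ((2:ℝ)^k • x) :=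
        smul_le hG h2 h3 _
    _ ≤ 1 * G ((2:ℝ)^k • x) := by
        apply mul_le_mul_of_nonneg_right h3 (nonneg hG _)
    _ = G ((2:ℝ)^k • x) := one_mul _
  rcases le_or_gt M₁ ‖x‖ with h | h
  · have := pow_two_le hG hK₁ hM₁ hΔ k x h
    linarith
  · have hb : G ((2:ℝ)^k • x) ≤ B := by
      apply hBall
      rw [norm_smul, Real.norm_eq_abs, abs_of_nonneg (by positivity : (0:ℝ) ≤ (2:ℝ)^k)]
      exact mul_le_mul_of_nonneg_left h.le (by positivity)
    have hKG : 0 ≤ K₁^k * G x := by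
      apply mul_nonneg (by positivity) (nonneg hG x)
    linarith

end GFAux

namespace OrlAux

lemma luxNorm_nonneg {N : ℕ} (F : Euc N → ℝ) (I : Set ℝ) (v : ℝ → Euc N) :
    0 ≤ luxNorm F I v :=
  Real.sInf_nonneg (fun _ hx => hx.1.le)

lemma luxNorm_le {N : ℕ} {F : Euc N → ℝ} {I : Set ℝ} {v : ℝ → Euc N} {ε : ℝ} (hε : 0 < ε)
    (h : (∫ t in I, F (ε⁻¹ • v t)) ≤ 1) : luxNorm F I v ≤ ε :=
  csInf_le ⟨0, fun _ hx => hx.1.le⟩ ⟨hε, h⟩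

lemma integrable_comp_smul {N : ℕ} {G : Euc N → ℝ} {μ : Measure ℝ} [IsFiniteMeasure μ]
    (hG : IsGFunction G) {u : ℝ → Euc N} (hm : AEStronglyMeasurable u μ)
    (hint : Integrable (fun t => G (u t)) μ) (c : ℝ) :
    Integrable (fun t => G (c • u t)) μ := by
  obtain ⟨K, B, hK, hB, hKB⟩ := GFAux.growth hG c
  apply Integrable.mono' ((hint.const_mul K).add (integrable_const B))
    ((GFAux.continuous hG).comp_aestronglyMeasurable (hm.const_smul c))
  refine Filter.Eventually.of_forall (fun t => ?_)
  rw [Real.norm_of_nonneg (GFAux.nonneg hG _)]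
  exact hKB (u t)

lemma modular_le {N : ℕ} {G : Euc N → ℝ} (hG : IsGFunction G) {I : Set ℝ} {μ : Measure ℝ}
    [IsFiniteMeasure μ] (hμ : volume.restrict I = μ) {u : ℝ → Euc N}
    (hm : AEStronglyMeasurable u μ) (hint : Integrable (fun t => G (u t)) μ)
    {C D : ℝ} (hlux : luxNorm G I u ≤ C) (hCD : C < D) :
    (∫ t, G (D⁻¹ • u t) ∂μ) ≤ 1 := by
  have hD : 0 < D := lt_of_le_of_lt (le_trans (luxNorm_nonneg G I u) hlux) hCD
  have hSint : ∀ α : ℝ, (∫ t in I, G (α⁻¹ • u t)) = ∫ t, G (α⁻¹ • u t) ∂μ := fun α => by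
    rw [hμ]
  have hne : {α : ℝ | 0 < α ∧ (∫ t in I, G (α⁻¹ • u t)) ≤ 1}.Nonempty := by
    set α₀ := (∫ t, G (u t) ∂μ) + 1 with hα₀
    have hint_nonneg : 0 ≤ ∫ t, G (u t) ∂μ := integral_nonneg (fun t => GFAux.nonneg hG _)
    have hα₀1 : 1 ≤ α₀ := by rw [hα₀]; linarith
    have hα₀p : 0 < α₀ := by linarith
    refine ⟨α₀, hα₀p, ?_⟩
    rw [hSint]
    have hptw : ∀ t, G (α₀⁻¹ • u t) ≤ α₀⁻¹ * G (u t) := fun t =>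
      GFAux.smul_le hG (by positivity) (inv_le_one_of_one_le₀ hα₀1) _
    calc (∫ t, G (α₀⁻¹ • u t) ∂μ) ≤ ∫ t, α₀⁻¹ * G (u t) ∂μ :=
        integral_mono (integrable_comp_smul hG hm hint _) (hint.const_mul _) hptw
    _ = α₀⁻¹ * ∫ t, G (u t) ∂μ := integral_const_mul _ _
    _ ≤ α₀⁻¹ * α₀ := by
        apply mul_le_mul_of_nonneg_left _ (by positivity)
        rw [hα₀]; linarith
    _ = 1 := inv_mul_cancel₀ (ne_of_gt hα₀p)
  have hlt : sInf {α : ℝ | 0 < α ∧ (∫ t in I, G (α⁻¹ • u t)) ≤ 1} < D :=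
    lt_of_le_of_lt hlux hCD
  obtain ⟨β, ⟨hβ0, hβ1⟩, hβD⟩ :=
    (csInf_lt_iff ⟨0, fun _ hx => hx.1.le⟩ hne).mp hlt
  rw [hSint] at hβ1
  have hfac0 : (0:ℝ) ≤ β * D⁻¹ := by positivity
  have hfac1 : β * D⁻¹ ≤ 1 := by
    rw [← le_div_iff₀ (by positivity : (0:ℝ) < D⁻¹)]
    simp only [one_div, inv_inv]
    exact hβD.le
  have hptw : ∀ t, G (D⁻¹ • u t) ≤ G (β⁻¹ • u t) := by
    intro t
    have h1 : D⁻¹ • u t = (β * D⁻¹) • (β⁻¹ • u t) := by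
      rw [smul_smul]
      congr 1
      field_simp
    rw [h1]
    calc G ((β * D⁻¹) • (β⁻¹ • u t)) ≤ (β * D⁻¹) * G (β⁻¹ • u t) :=
        GFAux.smul_le hG hfac0 hfac1 _
    _ ≤ 1 * G (β⁻¹ • u t) := mul_le_mul_of_nonneg_right hfac1 (GFAux.nonneg hG _)
    _ = _ := one_mul _
  calc (∫ t, G (D⁻¹ • u t) ∂μ) ≤ ∫ t, G (β⁻¹ • u t) ∂μ :=
      integral_mono (integrable_comp_smul hG hm hint _)
        (integrable_comp_smul hG hm hint _) hptw
  _ ≤ 1 := hβ1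

end OrlAux

lemma core_estimate {N : ℕ} {F : Euc N → ℝ} (hF : IsGFunction F) {μ : Measure ℝ}
    [IsFiniteMeasure μ]
    {v : ℝ → Euc N} (hv : AEStronglyMeasurable v μ)
    {g : ℝ → ℝ} (hg : Integrable g μ) (hgnn : ∀ᵐ t ∂μ, 0 ≤ g t)
    (hgint : (∫ t, g t ∂μ) ≤ 1/4)
    {R ε' B η : ℝ} (hB : 0 ≤ B) (hη : 0 ≤ η)
    (hsmes : μ {t | ε' ≤ ‖v t‖} ≤ ENNReal.ofReal (1/(4*(B+1))))
    (hηint : η * (μ univ).toReal ≤ 1/4)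
    (hbig : ∀ᵐ t ∂μ, R ≤ ‖v t‖ → F (v t) ≤ g t)
    (hmid : ∀ t, ‖v t‖ ≤ R → F (v t) ≤ B)
    (hsml : ∀ t, ‖v t‖ ≤ ε' → F (v t) ≤ η) :
    Integrable (fun t => F (v t)) μ ∧ (∫ t, F (v t) ∂μ) ≤ 1 := by
  classical
  set w := hv.mk v with hw
  have hA : MeasurableSet {t : ℝ | ε' ≤ ‖w t‖} :=
    measurableSet_le measurable_const hv.stronglyMeasurable_mk.measurable.norm
  set A := {t : ℝ | ε' ≤ ‖w t‖} with hAdef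
  have hAmeq : μ A = μ {t | ε' ≤ ‖v t‖} := by
    apply measure_congr
    apply Filter.eventuallyEq_set.mpr
    filter_upwards [hv.ae_eq_mk] with t ht
    simp only [hAdef, Set.mem_setOf_eq, ← hw, ht]
  have hAtoReal : (μ A).toReal ≤ 1/(4*(B+1)) := by
    rw [hAmeq]
    exact ENNReal.toReal_le_of_le_ofReal (by positivity) hsmes
  set h : ℝ → ℝ := fun t => g t + A.indicator (fun _ => B) t + η with hh
  have hind_nonneg : ∀ t, 0 ≤ A.indicator (fun _ : ℝ => B) t := fun t => by
    by_cases ht : t ∈ A <;> simp [Set.indicator_apply, ht, hB]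
  have hinth : Integrable h μ :=
    (hg.add ((integrable_const B).indicator hA)).add (integrable_const η)
  have hptw : ∀ᵐ t ∂μ, F (v t) ≤ h t := by
    filter_upwards [hbig, hgnn, hv.ae_eq_mk] with t hbt hgt hvt
    rw [← hw] at hvt
    rcases le_or_gt R ‖v t‖ with hR | hR
    · have := hbt hR
      have := hind_nonneg t
      simp only [hh]; linarith
    · rcases le_or_gt ε' ‖v t‖ with hε' | hε'
      · have htA : t ∈ A := by
          simp only [hAdef, Set.mem_setOf_eq, ← hw, ← hvt]; exact hε'
        have : A.indicator (fun _ : ℝ => B) t = B := by simp [Set.indicator_apply, htA]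
        have hFB := hmid t hR.le
        simp only [hh, this]; linarith
      · have := hsml t hε'.le
        have := hind_nonneg t
        simp only [hh]; linarith
  have hFm : AEStronglyMeasurable (fun t => F (v t)) μ :=
    (GFAux.continuous hF).comp_aestronglyMeasurable hv
  have hFint : Integrable (fun t => F (v t)) μ := by
    apply Integrable.mono' hinth hFm
    filter_upwards [hptw] with t ht
    rw [Real.norm_of_nonneg (GFAux.nonneg hF _)]
    exact ht
  refine ⟨hFint, ?_⟩
  have hinteg_h : (∫ t, h t ∂μ) ≤ 1 := by
    have ha : Integrable (fun t => g t + A.indicator (fun _ => B) t) μ :=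
      hg.add ((integrable_const B).indicator hA)
    have e1 : (∫ t, h t ∂μ) =
        (∫ t, (g t + A.indicator (fun _ => B) t) ∂μ) + (∫ _t, (η:ℝ) ∂μ) :=
      integral_add ha (integrable_const η)
    have e2 : (∫ t, (g t + A.indicator (fun _ => B) t) ∂μ) =
        (∫ t, g t ∂μ) + ∫ t, A.indicator (fun _ => B) t ∂μ :=
      integral_add hg ((integrable_const B).indicator hA)
    have h2 : (∫ t, A.indicator (fun _ => B) t ∂μ) = (μ A).toReal • B :=
      integral_indicator_const B hA
    have h3 : (∫ _t, (η : ℝ) ∂μ) = η * (μ univ).toReal := by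
      rw [integral_const, smul_eq_mul, mul_comm]; rfl
    have hBA : (μ A).toReal • B ≤ 1/4 := by
      rw [smul_eq_mul]
      have hABp : (0:ℝ) ≤ (μ A).toReal := ENNReal.toReal_nonneg
      calc (μ A).toReal * B ≤ (1/(4*(B+1))) * B :=
          mul_le_mul_of_nonneg_right hAtoReal hB
      _ ≤ 1/4 := by
          rw [div_mul_eq_mul_div, div_le_div_iff₀ (by positivity) (by norm_num)]
          nlinarith
    rw [e1, e2, h2, h3]
    linarith
  calc (∫ t, F (v t) ∂μ) ≤ ∫ t, h t ∂μ := integral_mono_ae hFint hinth hptw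
  _ ≤ 1 := hinteg_h

lemma restrict_eq {I : Set ℝ} {a b : ℝ} (hab : a < b) (hI1 : Ioo a b ⊆ I) (hI2 : I ⊆ Icc a b) :
    volume.restrict I = volume.restrict (Ioo a b) := by
  apply Measure.restrict_congr_set
  have hnull : volume ({a, b} : Set ℝ) = 0 :=
    Set.Countable.measure_zero (Set.toFinite ({a, b} : Set ℝ)).countable _
  rw [Filter.eventuallyEq_set]
  have : ∀ᵐ t, t ∉ ({a, b} : Set ℝ) := by
    rw [ae_iff]
    have hmem : {t : ℝ | ¬ t ∉ ({a, b} : Set ℝ)} = ({a, b} : Set ℝ) := by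
      ext t; simp only [Set.mem_setOf_eq, not_not]
    rw [hmem]; exact hnull
  filter_upwards [this] with t ht
  simp only [Set.mem_insert_iff, Set.mem_singleton_iff, not_or] at ht
  constructor
  · intro hI
    have := hI2 hI
    rw [Set.mem_Icc] at this
    exact ⟨lt_of_le_of_ne this.1 (Ne.symm ht.1), lt_of_le_of_ne this.2 ht.2⟩
  · exact fun h => hI1 h

lemma cauchy_core {N : ℕ} {F G : Euc N → ℝ}
    (hF : IsGFunction F) (hG : IsGFunction G)
    (hFG : ∀ α : ℝ, 0 < α → ∀ C : ℝ, ∃ R : ℝ, ∀ x : Euc N, R ≤ ‖x‖ →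
      C * F x ≤ G (α • x))
    {I : Set ℝ} {a b : ℝ} (hab : a < b) (hI1 : Ioo a b ⊆ I) (hI2 : I ⊆ Icc a b)
    {u : ℕ → ℝ → Euc N} (hu : ∀ n, MemLG G I (u n))
    {C : ℝ} (hC : 0 < C) (hbd : ∀ n, luxNorm G I (u n) ≤ C)
    (hmeas : ∀ ε : ℝ, 0 < ε → ∀ δ : ℝ, 0 < δ → ∃ N₀ : ℕ,
      ∀ n m : ℕ, N₀ ≤ n → N₀ ≤ m →
        volume {t | t ∈ I ∧ ε ≤ ‖u n t - u m t‖} ≤ ENNReal.ofReal δ)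
    {ε : ℝ} (hε : 0 < ε) :
    ∃ N₀ : ℕ, ∀ n m : ℕ, N₀ ≤ n → N₀ ≤ m →
      Integrable (fun t => F (ε⁻¹ • (u n t - u m t))) (volume.restrict (Ioo a b)) ∧
      (∫ t, F (ε⁻¹ • (u n t - u m t)) ∂(volume.restrict (Ioo a b))) ≤ 1 := by
  set μ := volume.restrict (Ioo a b) with hμdef
  have hfin : IsFiniteMeasure μ := by
    constructor
    rw [hμdef, Measure.restrict_apply_univ, Real.volume_Ioo]
    exact ENNReal.ofReal_lt_top
  have hrI : volume.restrict I = μ := restrict_eq hab hI1 hI2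
  have hum : ∀ n, AEStronglyMeasurable (u n) μ := fun n => by
    rw [← hrI]; exact (hu n).1
  have huint : ∀ n, Integrable (fun t => G (u n t)) μ := fun n => by
    rw [← hrI]; exact (hu n).2
  set D := C + 1 with hD
  have hDpos : (0:ℝ) < D := by rw [hD]; linarith
  have hmod : ∀ n, (∫ t, G (D⁻¹ • u n t) ∂μ) ≤ 1 := fun n =>
    OrlAux.modular_le hG hrI (hum n) (huint n) (hbd n) (by rw [hD]; linarith)
  -- big-norm threshold
  obtain ⟨R₀, hR₀⟩ := hFG (ε/(2*D)) (div_pos hε (by linarith [hDpos])) 4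
  set R := max R₀ 0 with hR
  -- ball bound for F
  obtain ⟨B, hB0, hBall⟩ := GFAux.bdd hF R
  -- small threshold
  set η := 1/(4*((b-a)+1)) with hη
  have hηpos : 0 < η := by
    rw [hη]; exact div_pos one_pos (by nlinarith)
  obtain ⟨δ₀, hδ₀, hsmall⟩ := GFAux.small hF η hηpos
  -- measure threshold
  obtain ⟨N₀, hN₀⟩ := hmeas (ε * δ₀) (by positivity) (1/(4*(B+1)))
    (div_pos one_pos (by linarith))
  refine ⟨N₀, fun n m hn hm => ?_⟩
  set v : ℝ → Euc N := fun t => ε⁻¹ • (u n t - u m t) with hv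
  have hvm : AEStronglyMeasurable v μ := ((hum n).sub (hum m)).const_smul ε⁻¹
  set g : ℝ → ℝ :=
    fun t => (1/4) * ((1/2) * G (D⁻¹ • u n t) + (1/2) * G (D⁻¹ • u m t)) with hg
  have hgn : Integrable (fun t => G (D⁻¹ • u n t)) μ :=
    OrlAux.integrable_comp_smul hG (hum n) (huint n) D⁻¹
  have hgm : Integrable (fun t => G (D⁻¹ • u m t)) μ :=
    OrlAux.integrable_comp_smul hG (hum m) (huint m) D⁻¹
  have hgint : Integrable g μ :=
    (((hgn.const_mul (1/2)).add (hgm.const_mul (1/2))).const_mul (1/4))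
  have hgnn : ∀ᵐ t ∂μ, 0 ≤ g t := Filter.Eventually.of_forall (fun t => by
    have := GFAux.nonneg hG (D⁻¹ • u n t)
    have := GFAux.nonneg hG (D⁻¹ • u m t)
    rw [hg]; positivity)
  have hgval : (∫ t, g t ∂μ) ≤ 1/4 := by
    have e0 : Integrable (fun t => (1/2) * G (D⁻¹ • u n t) + (1/2) * G (D⁻¹ • u m t)) μ :=
      (hgn.const_mul (1/2)).add (hgm.const_mul (1/2))
    have e1 : (∫ t, g t ∂μ) =
        (1/4) * (∫ t, ((1/2) * G (D⁻¹ • u n t) + (1/2) * G (D⁻¹ • u m t)) ∂μ) :=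
      integral_const_mul _ _
    have e2 : (∫ t, ((1/2) * G (D⁻¹ • u n t) + (1/2) * G (D⁻¹ • u m t)) ∂μ) =
        (∫ t, (1/2) * G (D⁻¹ • u n t) ∂μ) + (∫ t, (1/2) * G (D⁻¹ • u m t) ∂μ) :=
      integral_add (hgn.const_mul (1/2)) (hgm.const_mul (1/2))
    have e3 : (∫ t, (1/2) * G (D⁻¹ • u n t) ∂μ) = (1/2) * ∫ t, G (D⁻¹ • u n t) ∂μ :=
      integral_const_mul _ _
    have e4 : (∫ t, (1/2) * G (D⁻¹ • u m t) ∂μ) = (1/2) * ∫ t, G (D⁻¹ • u m t) ∂μ :=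
      integral_const_mul _ _
    have b1 := hmod n
    have b2 := hmod m
    have nn1 : 0 ≤ ∫ t, G (D⁻¹ • u n t) ∂μ :=
      integral_nonneg (fun t => GFAux.nonneg hG _)
    have nn2 : 0 ≤ ∫ t, G (D⁻¹ • u m t) ∂μ :=
      integral_nonneg (fun t => GFAux.nonneg hG _)
    rw [e1, e2, e3, e4]
    nlinarith
  have hsmes : μ {t | δ₀ ≤ ‖v t‖} ≤ ENNReal.ofReal (1/(4*(B+1))) := by
    have hsub : {t | δ₀ ≤ ‖v t‖} ∩ Ioo a b ⊆ {t | t ∈ I ∧ ε * δ₀ ≤ ‖u n t - u m t‖} := by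
      rintro t ⟨ht1, ht2⟩
      refine ⟨hI1 ht2, ?_⟩
      have : ‖v t‖ = ε⁻¹ * ‖u n t - u m t‖ := by
        rw [hv, norm_smul, Real.norm_eq_abs, abs_of_pos (by positivity)]
      rw [Set.mem_setOf_eq, this] at ht1
      have h2 : ε * δ₀ ≤ ε * (ε⁻¹ * ‖u n t - u m t‖) :=
        mul_le_mul_of_nonneg_left ht1 hε.le
      rwa [← mul_assoc, mul_inv_cancel₀ (ne_of_gt hε), one_mul] at h2
    have hstep : μ {t | δ₀ ≤ ‖v t‖} = volume ({t | δ₀ ≤ ‖v t‖} ∩ Ioo a b) := by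
      rw [hμdef, Measure.restrict_apply' measurableSet_Ioo]
    calc μ {t | δ₀ ≤ ‖v t‖} = volume ({t | δ₀ ≤ ‖v t‖} ∩ Ioo a b) := hstep
    _ ≤ volume {t | t ∈ I ∧ ε * δ₀ ≤ ‖u n t - u m t‖} := measure_mono hsub
    _ ≤ ENNReal.ofReal (1/(4*(B+1))) := hN₀ n m hn hm
  have hηint : η * (μ univ).toReal ≤ 1/4 := by
    have : (μ univ).toReal = b - a := by
      rw [hμdef, Measure.restrict_apply_univ, Real.volume_Ioo,
        ENNReal.toReal_ofReal (by linarith)]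
    rw [this, hη]
    rw [div_mul_eq_mul_div, div_le_div_iff₀ (by nlinarith : (0:ℝ) < 4*((b-a)+1)) (by norm_num)]
    nlinarith
  have hbig : ∀ᵐ t ∂μ, R ≤ ‖v t‖ → F (v t) ≤ g t := by
    refine Filter.Eventually.of_forall (fun t ht => ?_)
    have h4 : 4 * F (v t) ≤ G ((ε/(2*D)) • v t) :=
      hR₀ (v t) (le_trans (le_max_left _ _) ht)
    have hεne : ε ≠ 0 := ne_of_gt hε
    have hDne : D ≠ 0 := ne_of_gt hDpos
    have hs1 : (ε/(2*D)) • v t = (1/(2*D)) • (u n t - u m t) := by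
      rw [hv, smul_smul]
      congr 1
      field_simp
    have hs2 : (1/(2*D)) • (u n t - u m t)
        = (1/2 : ℝ) • (D⁻¹ • u n t) + (1/2 : ℝ) • (D⁻¹ • (-u m t)) := by
      rw [smul_smul, smul_smul, smul_neg, ← sub_eq_add_neg, ← smul_sub]
      congr 1
      rw [one_div, mul_inv]
      norm_num
    have hscal : (ε/(2*D)) • v t = (1/2 : ℝ) • (D⁻¹ • u n t) + (1/2 : ℝ) • (D⁻¹ • (-u m t)) :=
      hs1.trans hs2
    have hmid2 : G ((ε/(2*D)) • v t) ≤
        (1/2) * G (D⁻¹ • u n t) + (1/2) * G (D⁻¹ • (-u m t)) := by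
      rw [hscal]; exact GFAux.midpoint_le hG _ _
    have heven : G (D⁻¹ • (-u m t)) = G (D⁻¹ • u m t) := by
      rw [smul_neg, hG.2.2.1]
    rw [heven] at hmid2
    rw [hg]
    linarith
  have hmid : ∀ t, ‖v t‖ ≤ R → F (v t) ≤ B := fun t ht => hBall _ ht
  have hsml : ∀ t, ‖v t‖ ≤ δ₀ → F (v t) ≤ η := fun t ht => hsmall _ ht
  exact core_estimate hF hvm hgint hgnn hgval hB0 hηpos.le hsmes hηint hbig hmid hsml

lemma fatou_bound {N : ℕ} {F : Euc N → ℝ} (hF : IsGFunction F) {μ : Measure ℝ}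
    {v : ℕ → ℝ → Euc N} {w : ℝ → Euc N}
    (hvm : ∀ k, AEStronglyMeasurable (v k) μ) (hwm : AEStronglyMeasurable w μ)
    (hconv : ∀ᵐ t ∂μ, Tendsto (fun k => v k t) atTop (nhds (w t)))
    (hbound : ∀ k, Integrable (fun t => F (v k t)) μ ∧ (∫ t, F (v k t) ∂μ) ≤ 1) :
    Integrable (fun t => F (w t)) μ ∧ (∫ t, F (w t) ∂μ) ≤ 1 := by
  have hFm : ∀ k, AEStronglyMeasurable (fun t => F (v k t)) μ := fun k =>
    (GFAux.continuous hF).comp_aestronglyMeasurable (hvm k)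
  have hFwm : AEStronglyMeasurable (fun t => F (w t)) μ :=
    (GFAux.continuous hF).comp_aestronglyMeasurable hwm
  have hm : ∀ k, AEMeasurable (fun t => ENNReal.ofReal (F (v k t))) μ := fun k =>
    (hFm k).aemeasurable.ennreal_ofReal
  have hlint : ∀ k, (∫⁻ t, ENNReal.ofReal (F (v k t)) ∂μ) ≤ 1 := by
    intro k
    rw [← ofReal_integral_eq_lintegral_ofReal (hbound k).1
      (Filter.Eventually.of_forall fun t => GFAux.nonneg hF _)]
    calc ENNReal.ofReal (∫ t, F (v k t) ∂μ) ≤ ENNReal.ofReal 1 :=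
        ENNReal.ofReal_le_ofReal (hbound k).2
    _ = 1 := ENNReal.ofReal_one
  have haeeq : ∀ᵐ t ∂μ, ENNReal.ofReal (F (w t))
      = liminf (fun k => ENNReal.ofReal (F (v k t))) atTop := by
    filter_upwards [hconv] with t ht
    have : Tendsto (fun k => ENNReal.ofReal (F (v k t))) atTop
        (nhds (ENNReal.ofReal (F (w t)))) :=
      (ENNReal.continuous_ofReal.tendsto _).comp
        (((GFAux.continuous hF).tendsto _).comp ht)
    exact this.liminf_eq.symm
  have hkey : (∫⁻ t, ENNReal.ofReal (F (w t)) ∂μ) ≤ 1 := by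
    calc (∫⁻ t, ENNReal.ofReal (F (w t)) ∂μ)
        = ∫⁻ t, liminf (fun k => ENNReal.ofReal (F (v k t))) atTop ∂μ :=
        lintegral_congr_ae haeeq
    _ ≤ liminf (fun k => ∫⁻ t, ENNReal.ofReal (F (v k t)) ∂μ) atTop :=
        lintegral_liminf_le' hm
    _ ≤ 1 := liminf_le_of_frequently_le' (Filter.Frequently.of_forall hlint)
  have hfi : Integrable (fun t => F (w t)) μ := by
    refine ⟨hFwm, ?_⟩
    rw [hasFiniteIntegral_iff_ofReal (Filter.Eventually.of_forall fun t => GFAux.nonneg hF _)]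
    exact lt_of_le_of_lt hkey ENNReal.one_lt_top
  refine ⟨hfi, ?_⟩
  rw [integral_eq_lintegral_of_nonneg_ae
    (Filter.Eventually.of_forall fun t => GFAux.nonneg hF _) hFwm]
  calc (∫⁻ t, ENNReal.ofReal (F (w t)) ∂μ).toReal ≤ (1 : ENNReal).toReal :=
      ENNReal.toReal_mono ENNReal.one_ne_top hkey
  _ = 1 := by simp

/-- If F ≺≺ G, a norm-bounded sequence in L^G which is Cauchy in
measure is Cauchy in the L^F norm and converges in L^F. -/
theorem compact_embedding_sequence {N : ℕ} (hN : 1 ≤ N) (F G : Euc N → ℝ)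
    (hF : IsGFunction F) (hG : IsGFunction G)
    (hFG : ∀ α : ℝ, 0 < α → ∀ C : ℝ, ∃ R : ℝ, ∀ x : Euc N, R ≤ ‖x‖ →
      C * F x ≤ G (α • x))
    (I : Set ℝ) (a b : ℝ) (hab : a < b) (hI1 : Ioo a b ⊆ I) (hI2 : I ⊆ Icc a b)
    (u : ℕ → ℝ → Euc N) (hu : ∀ n, MemLG G I (u n))
    (C : ℝ) (hC : 0 < C) (hbd : ∀ n, luxNorm G I (u n) ≤ C)
    (hmeas : ∀ ε : ℝ, 0 < ε → ∀ δ : ℝ, 0 < δ → ∃ N₀ : ℕ,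
      ∀ n m : ℕ, N₀ ≤ n → N₀ ≤ m →
        volume {t | t ∈ I ∧ ε ≤ ‖u n t - u m t‖} ≤ ENNReal.ofReal δ) :
    (∀ ε : ℝ, 0 < ε → ∃ N₀ : ℕ, ∀ n m : ℕ, N₀ ≤ n → N₀ ≤ m →
        luxNorm F I (fun t => u n t - u m t) ≤ ε) ∧
    ∃ w : ℝ → Euc N, MemLG F I w ∧
      Tendsto (fun n => luxNorm F I (fun t => u n t - w t)) atTop (nhds 0) := by
  set μ := volume.restrict (Ioo a b) with hμdef
  have hμfin : IsFiniteMeasure μ := by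
    constructor
    rw [hμdef, Measure.restrict_apply_univ, Real.volume_Ioo]
    exact ENNReal.ofReal_lt_top
  have hrI : volume.restrict I = μ := restrict_eq hab hI1 hI2
  have hum : ∀ n, AEStronglyMeasurable (u n) μ := fun n => hrI ▸ (hu n).1
  have huint : ∀ n, Integrable (fun t => G (u n t)) μ := fun n => hrI ▸ (hu n).2
  -- Part 1 : Cauchy in the Luxemburg norm of F
  have part1 : ∀ ε : ℝ, 0 < ε → ∃ N₀ : ℕ, ∀ n m : ℕ, N₀ ≤ n → N₀ ≤ m →
      luxNorm F I (fun t => u n t - u m t) ≤ ε := by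
    intro ε hε
    obtain ⟨N₀, hN₀⟩ := cauchy_core hF hG hFG hab hI1 hI2 hu hC hbd hmeas hε
    refine ⟨N₀, fun n m hn hm => OrlAux.luxNorm_le hε ?_⟩
    have he : (∫ t in I, F (ε⁻¹ • (u n t - u m t))) =
        ∫ t, F (ε⁻¹ • (u n t - u m t)) ∂μ := by rw [hrI]
    rw [he]
    exact (hN₀ n m hn hm).2
  refine ⟨part1, ?_⟩
  -- L¹ membership
  set D := C + 1 with hD
  have hDpos : (0:ℝ) < D := by rw [hD]; linarith
  have hgn : ∀ n, Integrable (fun t => G (D⁻¹ • u n t)) μ := fun n =>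
    OrlAux.integrable_comp_smul hG (hum n) (huint n) D⁻¹
  obtain ⟨RG, hRG0, hGnorm⟩ := GFAux.norm_le hG
  have hL1 : ∀ n, Integrable (u n) μ := by
    intro n
    apply Integrable.mono' (((hgn n).const_mul D).add (integrable_const (D * RG))) (hum n)
    refine Filter.Eventually.of_forall (fun t => ?_)
    have h1 : ‖u n t‖ = D * ‖D⁻¹ • u n t‖ := by
      rw [norm_smul, Real.norm_eq_abs, abs_of_pos (inv_pos.mpr hDpos), ← mul_assoc,
        mul_inv_cancel₀ (ne_of_gt hDpos), one_mul]
    have h2 := hGnorm (D⁻¹ • u n t)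
    calc ‖u n t‖ = D * ‖D⁻¹ • u n t‖ := h1
    _ ≤ D * (RG + G (D⁻¹ • u n t)) := mul_le_mul_of_nonneg_left h2 hDpos.le
    _ = D * G (D⁻¹ • u n t) + D * RG := by ring
  -- Cauchy in L¹
  obtain ⟨RF, hRF0, hFnorm⟩ := GFAux.norm_le hF
  have hba : (μ univ).toReal = b - a := by
    rw [hμdef, Measure.restrict_apply_univ, Real.volume_Ioo,
      ENNReal.toReal_ofReal (by linarith)]
  set K := RF * (b - a) + 1 with hK
  have hKpos : 0 < K := by rw [hK]; nlinarith
  have hdist : ∀ n m : ℕ, dist ((hL1 n).toL1 (u n)) ((hL1 m).toL1 (u m))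
      = ∫ t, ‖u n t - u m t‖ ∂μ := by
    intro n m
    rw [dist_eq_norm, ← Integrable.toL1_sub, Integrable.norm_toL1_eq_lintegral_norm,
      ← ofReal_integral_eq_lintegral_ofReal ((hL1 n).sub (hL1 m)).norm
        (Filter.Eventually.of_forall fun t => norm_nonneg _),
      ENNReal.toReal_ofReal (integral_nonneg fun t => norm_nonneg _)]
    simp [Pi.sub_apply]
  have hcauchy : CauchySeq (fun n => (hL1 n).toL1 (u n)) := by
    rw [Metric.cauchySeq_iff]
    intro ε hε
    have hε2 : 0 < ε / (2 * K) := by positivity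
    obtain ⟨N₀, hN₀⟩ := cauchy_core hF hG hFG hab hI1 hI2 hu hC hbd hmeas hε2
    refine ⟨N₀, fun n hn m hm => ?_⟩
    rw [hdist]
    set ε₂ := ε / (2 * K) with hε₂def
    obtain ⟨hFint, hFle⟩ := hN₀ n m hn hm
    have hptw : ∀ t, ‖u n t - u m t‖ ≤ ε₂ * RF + ε₂ * F (ε₂⁻¹ • (u n t - u m t)) := by
      intro t
      have h1 : ‖u n t - u m t‖ = ε₂ * ‖ε₂⁻¹ • (u n t - u m t)‖ := by
        rw [norm_smul, Real.norm_eq_abs, abs_of_pos (inv_pos.mpr hε2), ← mul_assoc,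
          mul_inv_cancel₀ (ne_of_gt hε2), one_mul]
      have h2 := hFnorm (ε₂⁻¹ • (u n t - u m t))
      calc ‖u n t - u m t‖ = ε₂ * ‖ε₂⁻¹ • (u n t - u m t)‖ := h1
      _ ≤ ε₂ * (RF + F (ε₂⁻¹ • (u n t - u m t))) := mul_le_mul_of_nonneg_left h2 hε2.le
      _ = ε₂ * RF + ε₂ * F (ε₂⁻¹ • (u n t - u m t)) := by ring
    have hFnn : 0 ≤ ∫ t, F (ε₂⁻¹ • (u n t - u m t)) ∂μ :=
      integral_nonneg fun t => GFAux.nonneg hF _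
    have hintle : (∫ t, ‖u n t - u m t‖ ∂μ) ≤ ε₂ * RF * (b - a) + ε₂ * 1 := by
      have e1 : (∫ t, (ε₂ * RF + ε₂ * F (ε₂⁻¹ • (u n t - u m t))) ∂μ)
          = (∫ _t, (ε₂ * RF : ℝ) ∂μ) + ∫ t, ε₂ * F (ε₂⁻¹ • (u n t - u m t)) ∂μ :=
        integral_add (integrable_const _) (hFint.const_mul ε₂)
      have e2 : (∫ _t, (ε₂ * RF : ℝ) ∂μ) = ε₂ * RF * (b - a) := by
        rw [integral_const, smul_eq_mul, mul_comm]; exact congrArg _ hba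
      have e3 : (∫ t, ε₂ * F (ε₂⁻¹ • (u n t - u m t)) ∂μ)
          = ε₂ * ∫ t, F (ε₂⁻¹ • (u n t - u m t)) ∂μ := integral_const_mul _ _
      calc (∫ t, ‖u n t - u m t‖ ∂μ)
          ≤ ∫ t, (ε₂ * RF + ε₂ * F (ε₂⁻¹ • (u n t - u m t))) ∂μ :=
          integral_mono ((hL1 n).sub (hL1 m)).norm
            ((integrable_const _).add (hFint.const_mul ε₂))
            (fun t => hptw t)
      _ = ε₂ * RF * (b - a) + ε₂ * ∫ t, F (ε₂⁻¹ • (u n t - u m t)) ∂μ := by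
          rw [e1, e2, e3]
      _ ≤ ε₂ * RF * (b - a) + ε₂ * 1 := by nlinarith
    have hfinal : ε₂ * RF * (b - a) + ε₂ * 1 < ε := by
      have : ε₂ * RF * (b - a) + ε₂ * 1 = ε₂ * K := by rw [hK]; ring
      rw [this, hε₂def]
      rw [div_mul_eq_mul_div, div_lt_iff₀ (by positivity)]
      nlinarith
    exact lt_of_le_of_lt hintle hfinal
  -- L¹ limit
  obtain ⟨LL, hLL⟩ := cauchySeq_tendsto_of_complete hcauchy
  set w : ℝ → Euc N := (LL : ℝ → Euc N) with hwdef
  have hwm : AEStronglyMeasurable w μ := Lp.aestronglyMeasurable LL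
  have htim : TendstoInMeasure μ u atTop w :=
    TendstoInMeasure.congr (fun n => Integrable.coeFn_toL1 (hL1 n)) EventuallyEq.rfl
      (tendstoInMeasure_of_tendsto_Lp hLL)
  obtain ⟨ns, hns_mono, hns_ae⟩ := htim.exists_seq_tendsto_ae
  -- Fatou-type bound for u n - w
  have hfatou : ∀ ε : ℝ, 0 < ε → ∃ N₀ : ℕ, ∀ n, N₀ ≤ n →
      Integrable (fun t => F (ε⁻¹ • (u n t - w t))) μ ∧
      (∫ t, F (ε⁻¹ • (u n t - w t)) ∂μ) ≤ 1 := by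
    intro ε hε
    obtain ⟨N₀, hN₀⟩ := cauchy_core hF hG hFG hab hI1 hI2 hu hC hbd hmeas hε
    refine ⟨N₀, fun n hn => ?_⟩
    have hkd : ∀ k : ℕ, N₀ ≤ ns (k + N₀) :=
      fun k => le_trans (Nat.le_add_left N₀ k) (hns_mono.le_apply)
    apply fatou_bound hF
      (v := fun k => fun t => ε⁻¹ • (u n t - u (ns (k + N₀)) t))
      (w := fun t => ε⁻¹ • (u n t - w t))
    · exact fun k => ((hum n).sub (hum (ns (k + N₀)))).const_smul ε⁻¹
    · exact ((hum n).sub hwm).const_smul ε⁻¹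
    · filter_upwards [hns_ae] with t ht
      have h1 : Tendsto (fun k => u (ns (k + N₀)) t) atTop (nhds (w t)) :=
        ht.comp (tendsto_add_atTop_nat N₀)
      have h2 : Tendsto (fun k => u n t - u (ns (k + N₀)) t) atTop (nhds (u n t - w t)) :=
        tendsto_const_nhds.sub h1
      exact h2.const_smul ε⁻¹
    · exact fun k => hN₀ n (ns (k + N₀)) hn (hkd k)
  -- luxNorm convergence statement
  have hlux : ∀ ε : ℝ, 0 < ε → ∃ N₀ : ℕ, ∀ n, N₀ ≤ n →
      luxNorm F I (fun t => u n t - w t) ≤ ε := by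
    intro ε hε
    obtain ⟨N₀, hN₀⟩ := hfatou ε hε
    refine ⟨N₀, fun n hn => OrlAux.luxNorm_le hε ?_⟩
    have he : (∫ t in I, F (ε⁻¹ • (u n t - w t))) = ∫ t, F (ε⁻¹ • (u n t - w t)) ∂μ := by
      rw [hrI]
    rw [he]
    exact (hN₀ n hn).2
  refine ⟨w, ⟨?_, ?_⟩, ?_⟩
  · show AEStronglyMeasurable w (volume.restrict I)
    rw [hrI]; exact hwm
  · show Integrable (fun t => F (w t)) (volume.restrict I)
    rw [hrI]
    -- F (w t) ≤ (1/2) F (2 • (w t - u n₀ t)) + (1/2) F (2 • u n₀ t)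
    obtain ⟨N₁, hN₁⟩ := hfatou (1/2) (by norm_num)
    have h2wu : Integrable (fun t => F ((2:ℝ) • (u N₁ t - w t))) μ := by
      have h := (hN₁ N₁ le_rfl).1
      have hinv : ((1:ℝ)/2)⁻¹ = (2:ℝ) := by norm_num
      simpa [hinv] using h
    have h2wu' : Integrable (fun t => F ((2:ℝ) • (w t - u N₁ t))) μ := by
      have heq : (fun t => F ((2:ℝ) • (w t - u N₁ t)))
          = fun t => F ((2:ℝ) • (u N₁ t - w t)) := by
        funext t
        have : (2:ℝ) • (w t - u N₁ t) = -((2:ℝ) • (u N₁ t - w t)) := by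
          rw [← smul_neg]; congr 1; abel
        rw [this, hF.2.2.1]
      rw [heq]; exact h2wu
    have h2u : Integrable (fun t => F ((2:ℝ) • u N₁ t)) μ := by
      obtain ⟨R₂, hR₂⟩ := hFG (1/(2*D)) (by positivity) 1
      obtain ⟨B₂, hB₂0, hB₂⟩ := GFAux.bdd hF (max R₂ 0)
      apply Integrable.mono' ((hgn N₁).add (integrable_const B₂))
        ((GFAux.continuous hF).comp_aestronglyMeasurable ((hum N₁).const_smul (2:ℝ)))
      refine Filter.Eventually.of_forall (fun t => ?_)
      rw [Real.norm_of_nonneg (GFAux.nonneg hF _)]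
      simp only [Pi.add_apply, Pi.smul_apply]
      have hGnn := GFAux.nonneg hG (D⁻¹ • u N₁ t)
      have hFnn2 := GFAux.nonneg hF ((2:ℝ) • u N₁ t)
      rcases le_or_gt (max R₂ 0) ‖(2:ℝ) • u N₁ t‖ with hcase | hcase
      · have h3 := hR₂ ((2:ℝ) • u N₁ t) (le_trans (le_max_left _ _) hcase)
        rw [one_mul] at h3
        have hsc : (1/(2*D)) • ((2:ℝ) • u N₁ t) = D⁻¹ • u N₁ t := by
          rw [smul_smul]
          congr 1
          field_simp
        rw [hsc] at h3
        linarith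
      · have h3 := hB₂ _ hcase.le
        linarith
    apply Integrable.mono' ((h2wu'.const_mul (1/2)).add (h2u.const_mul (1/2)))
      ((GFAux.continuous hF).comp_aestronglyMeasurable hwm)
    refine Filter.Eventually.of_forall (fun t => ?_)
    rw [Real.norm_of_nonneg (GFAux.nonneg hF _)]
    simp only [Pi.add_apply]
    have h12 : (1/2:ℝ) * 2 = 1 := by norm_num
    have hsplit : (1/2:ℝ) • ((2:ℝ) • (w t - u N₁ t)) + (1/2:ℝ) • ((2:ℝ) • u N₁ t) = w t := by
      rw [smul_smul, smul_smul, h12, one_smul, one_smul]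
      abel
    calc F (w t) = F ((1/2:ℝ) • ((2:ℝ) • (w t - u N₁ t)) + (1/2:ℝ) • ((2:ℝ) • u N₁ t)) :=
        (congrArg F hsplit).symm
    _ ≤ (1/2) * F ((2:ℝ) • (w t - u N₁ t)) + (1/2) * F ((2:ℝ) • u N₁ t) :=
        GFAux.midpoint_le hF _ _
  · rw [Metric.tendsto_atTop]
    intro ε hε
    obtain ⟨N₀, hN₀⟩ := hlux (ε/2) (by linarith)
    refine ⟨N₀, fun n hn => ?_⟩
    rw [Real.dist_eq, sub_zero, abs_of_nonneg (OrlAux.luxNorm_nonneg F I _)]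
    exact lt_of_le_of_lt (hN₀ n hn) (by linarith)

end
end

section
/- Let G : ℝ^N → ℝ be an admissible G-function with Fenchel conjugate G*, and I ⊂ ℝ a bounded nondegenerate interval. Let v ∈ L¹(I,ℝ^N) and M > 0 be such that ∫_I ⟨u(t), v(t)⟩ dt ≤ M ‖u‖_G for every step function u : I → ℝ^N (a function taking finitely many values, each on a measurable subset of I). Then ∫_I G*(v(t)/M) dt ≤ 1; in particular v ∈ L^{G*}(I,ℝ^N) and ‖v‖_{G*} ≤ M. -/
open MeasureTheory Filter Set

noncomputable section

namespace GFunAux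

variable {N : ℕ} {G : Euc N → ℝ}

lemma G_nonneg (hG : IsGFunction G) (x : Euc N) : 0 ≤ G x := by
  obtain ⟨h0, hc, he, -⟩ := hG
  have h := hc.2 (mem_univ x) (mem_univ (-x)) (by norm_num : (0:ℝ) ≤ 1/2)
    (by norm_num : (0:ℝ) ≤ 1/2) (by norm_num)
  have hx : (1/2 : ℝ) • x + (1/2 : ℝ) • (-x) = 0 := by
    rw [smul_neg, add_neg_cancel]
  rw [hx, h0, he x] at h
  simp only [smul_eq_mul] at h
  linarith

lemma G_cont (hG : IsGFunction G) : Continuous G := by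
  rw [← continuousOn_univ]
  exact ConvexOn.continuousOn isOpen_univ hG.2.1

lemma G_smul_le (hG : IsGFunction G) {c : ℝ} (h0 : 0 ≤ c) (h1 : c ≤ 1) (x : Euc N) :
    G (c • x) ≤ c * G x := by
  have h := hG.2.1.2 (mem_univ x) (mem_univ (0 : Euc N)) h0
    (by linarith : (0:ℝ) ≤ 1 - c) (by ring)
  simpa [hG.1, smul_eq_mul] using h

lemma fc_bddAbove (hG : IsGFunction G) (y : Euc N) :
    BddAbove (Set.range fun x : Euc N => ((inner ℝ x y : ℝ) - G x)) := by
  obtain ⟨R, hR⟩ := hG.2.2.2.1 ‖y‖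
  refine ⟨max R 0 * ‖y‖, ?_⟩
  rintro z ⟨x, rfl⟩
  rcases le_or_gt ‖x‖ (max R 0) with hx | hx
  · have h1 : (inner ℝ x y : ℝ) ≤ ‖x‖ * ‖y‖ := real_inner_le_norm x y
    have h2 : ‖x‖ * ‖y‖ ≤ max R 0 * ‖y‖ := mul_le_mul_of_nonneg_right hx (norm_nonneg y)
    have := G_nonneg hG x
    simp only; linarith
  · have hRx : R ≤ ‖x‖ := le_of_lt (lt_of_le_of_lt (le_max_left R 0) hx)
    have h1 : ‖y‖ * ‖x‖ ≤ G x := hR x hRx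
    have h2 : (inner ℝ x y : ℝ) ≤ ‖x‖ * ‖y‖ := real_inner_le_norm x y
    have h3 : (0:ℝ) ≤ max R 0 * ‖y‖ := mul_nonneg (le_max_right R 0) (norm_nonneg y)
    simp only; nlinarith

lemma fc_le (hG : IsGFunction G) (x y : Euc N) :
    (inner ℝ x y : ℝ) - G x ≤ fenchelConj G y :=
  le_ciSup (fc_bddAbove hG y) x

lemma fc_ciSup_le {y : Euc N} {c : ℝ} (h : ∀ x : Euc N, (inner ℝ x y : ℝ) - G x ≤ c) :
    fenchelConj G y ≤ c :=
  ciSup_le h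

lemma fc_nonneg (hG : IsGFunction G) (y : Euc N) : 0 ≤ fenchelConj G y := by
  have := fc_le hG 0 y
  simpa [hG.1] using this

lemma fc_zero (hG : IsGFunction G) : fenchelConj G (0 : Euc N) = 0 := by
  refine le_antisymm (fc_ciSup_le fun x => ?_) (fc_nonneg hG 0)
  have := G_nonneg hG x
  simp only [inner_zero_right]
  linarith

lemma fc_convex (hG : IsGFunction G) : ConvexOn ℝ Set.univ (fenchelConj G) := by
  refine ⟨convex_univ, fun p _ q _ c d hc hd hcd => ?_⟩
  refine fc_ciSup_le fun x => ?_
  have h1 : (inner ℝ x (c • p + d • q) : ℝ) - G x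
      = c * ((inner ℝ x p : ℝ) - G x) + d * ((inner ℝ x q : ℝ) - G x) := by
    rw [inner_add_right, real_inner_smul_right, real_inner_smul_right]
    have : G x = (c + d) * G x := by rw [hcd, one_mul]
    nlinarith [this]
  rw [h1]
  have h2 := mul_le_mul_of_nonneg_left (fc_le hG x p) hc
  have h3 := mul_le_mul_of_nonneg_left (fc_le hG x q) hd
  simp only [smul_eq_mul]
  linarith

lemma fc_cont (hG : IsGFunction G) : Continuous (fenchelConj G) := by
  rw [← continuousOn_univ]
  exact ConvexOn.continuousOn isOpen_univ (fc_convex hG)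

lemma fc_radial (hG : IsGFunction G) {s : ℝ} (hs0 : 0 ≤ s) (hs1 : s ≤ 1) (y : Euc N) :
    fenchelConj G (s • y) ≤ fenchelConj G y := by
  have h := (fc_convex hG).2 (mem_univ y) (mem_univ (0 : Euc N)) hs0
    (by linarith : (0:ℝ) ≤ 1 - s) (by ring)
  rw [smul_zero, add_zero, fc_zero hG] at h
  simp only [smul_eq_mul, mul_zero, add_zero] at h
  have := fc_nonneg hG y
  nlinarith

end GFunAux

namespace GFunAux

variable {N : ℕ} {G : Euc N → ℝ}

lemma fc_double (hG : IsGFunction G) :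
    ∃ A B : ℝ, 0 ≤ A ∧ 0 ≤ B ∧ ∀ y : Euc N,
      fenchelConj G ((2:ℝ) • y) ≤ A * ‖y‖ + B * fenchelConj G y := by
  obtain ⟨K₂, hK₂, M₂, hM₂, hG6⟩ := hG.2.2.2.2.2
  have hK₂0 : (0:ℝ) < K₂ := lt_of_lt_of_le one_pos hK₂
  refine ⟨2 * K₂ * M₂, 2 * K₂, by positivity, by positivity, fun y => ?_⟩
  refine fc_ciSup_le fun x => ?_
  have hir : (inner ℝ x ((2:ℝ) • y) : ℝ) = 2 * (inner ℝ x y : ℝ) := real_inner_smul_right x y 2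
  by_cases hx : K₂ * M₂ ≤ ‖x‖
  · have hxx : M₂ ≤ ‖K₂⁻¹ • x‖ := by
      rw [norm_smul, Real.norm_eq_abs, abs_of_pos (inv_pos.2 hK₂0)]
      rw [← mul_le_mul_iff_right₀ hK₂0]
      calc K₂ * M₂ ≤ ‖x‖ := hx
        _ = K₂ * (K₂⁻¹ * ‖x‖) := by field_simp
    have h6 := hG6 (K₂⁻¹ • x) hxx
    rw [smul_smul, mul_inv_cancel₀ (ne_of_gt hK₂0), one_smul] at h6
    have hfc := fc_le hG (K₂⁻¹ • x) y
    rw [real_inner_smul_left] at hfc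
    -- hfc : K₂⁻¹ * inner x y - G (K₂⁻¹ • x) ≤ fc y
    -- h6 : G (K₂⁻¹ • x) ≤ 1/(2K₂) * G x
    have key : 2 * (inner ℝ x y : ℝ) - G x ≤ 2 * K₂ * fenchelConj G y := by
      have h1 : K₂⁻¹ * (inner ℝ x y : ℝ) ≤ fenchelConj G y + 1/(2*K₂) * G x := by linarith
      have h2 := mul_le_mul_of_nonneg_left h1 (by positivity : (0:ℝ) ≤ 2 * K₂)
      have e1 : 2 * K₂ * (K₂⁻¹ * (inner ℝ x y : ℝ)) = 2 * (inner ℝ x y : ℝ) := by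
        field_simp
      have e2 : 2 * K₂ * (fenchelConj G y + 1/(2*K₂) * G x)
          = 2 * K₂ * fenchelConj G y + G x := by field_simp
      rw [e1, e2] at h2; linarith
    have hy : (0:ℝ) ≤ 2 * K₂ * M₂ * ‖y‖ := by positivity
    rw [hir]; linarith
  · push_neg at hx
    have h1 : (inner ℝ x y : ℝ) ≤ ‖x‖ * ‖y‖ := real_inner_le_norm x y
    have h2 : ‖x‖ * ‖y‖ ≤ K₂ * M₂ * ‖y‖ :=
      mul_le_mul_of_nonneg_right (le_of_lt hx) (norm_nonneg y)
    have h3 := G_nonneg hG x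
    have h4 := fc_nonneg hG y
    have h5 : (0:ℝ) ≤ 2 * K₂ * fenchelConj G y := by positivity
    rw [hir]; nlinarith

lemma fc_scale (hG : IsGFunction G) (c : ℝ) (hc : 0 ≤ c) :
    ∃ A B : ℝ, 0 ≤ A ∧ 0 ≤ B ∧ ∀ y : Euc N,
      fenchelConj G (c • y) ≤ A * ‖y‖ + B * fenchelConj G y := by
  obtain ⟨A, B, hA, hB, hd⟩ := fc_double hG
  have key : ∀ k : ℕ, ∃ A' B' : ℝ, 0 ≤ A' ∧ 0 ≤ B' ∧ ∀ y : Euc N,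
      fenchelConj G ((2^k : ℝ) • y) ≤ A' * ‖y‖ + B' * fenchelConj G y := by
    intro k
    induction k with
    | zero =>
      refine ⟨0, 1, le_refl _, zero_le_one, fun y => ?_⟩
      simp [pow_zero, one_smul]
    | succ k ih =>
      obtain ⟨A', B', hA', hB', hk⟩ := ih
      refine ⟨A * 2^k + B * A', B * B', by positivity, by positivity, fun y => ?_⟩
      have h1 : (2^(k+1) : ℝ) • y = (2:ℝ) • ((2^k : ℝ) • y) := by
        rw [smul_smul]; norm_num [pow_succ]; ring_nf
      rw [h1]
      have h2 := hd ((2^k : ℝ) • y)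
      have h3 : ‖(2^k : ℝ) • y‖ = 2^k * ‖y‖ := by
        rw [norm_smul, Real.norm_eq_abs, abs_of_pos (by positivity : (0:ℝ) < 2^k)]
      have h4 := mul_le_mul_of_nonneg_left (hk y) hB
      rw [h3] at h2
      calc fenchelConj G ((2:ℝ) • ((2^k : ℝ) • y))
          ≤ A * (2^k * ‖y‖) + B * fenchelConj G ((2^k : ℝ) • y) := h2
        _ ≤ A * (2^k * ‖y‖) + B * (A' * ‖y‖ + B' * fenchelConj G y) := by linarith
        _ = (A * 2^k + B * A') * ‖y‖ + B * B' * fenchelConj G y := by ring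
  obtain ⟨k, hkc⟩ := pow_unbounded_of_one_lt c (one_lt_two (α := ℝ))
  obtain ⟨A', B', hA', hB', hk⟩ := key k
  refine ⟨A', B', hA', hB', fun y => ?_⟩
  have h2k : (0:ℝ) < 2^k := by positivity
  have h1 : c • y = (c / 2^k) • ((2^k : ℝ) • y) := by
    rw [smul_smul]; congr 1; field_simp
  rw [h1]
  calc fenchelConj G ((c / 2^k) • ((2^k : ℝ) • y))
      ≤ fenchelConj G ((2^k : ℝ) • y) :=
        fc_radial hG (by positivity) (by rw [div_le_one h2k]; exact le_of_lt hkc) _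
    _ ≤ A' * ‖y‖ + B' * fenchelConj G y := hk y


def happrox (G : Euc N → ℝ) (e : ℕ → Euc N) : ℕ → Euc N → ℝ
  | 0 => fun _ => 0
  | (n+1) => fun y => max (happrox G e n y) ((inner ℝ (e n) y : ℝ) - G (e n))

variable {e : ℕ → Euc N}

lemma happrox_mono (y : Euc N) : Monotone fun n => happrox G e n y :=
  monotone_nat_of_le_succ fun n => le_max_left _ _

lemma happrox_nonneg (n : ℕ) (y : Euc N) : 0 ≤ happrox G e n y :=
  happrox_mono y (Nat.zero_le n)

lemma happrox_le (hG : IsGFunction G) (n : ℕ) (y : Euc N) :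
    happrox G e n y ≤ fenchelConj G y := by
  induction n with
  | zero => exact fc_nonneg hG y
  | succ n ih => exact max_le ih (fc_le hG (e n) y)

lemma happrox_cont (hG : IsGFunction G) (n : ℕ) : Continuous (happrox G e n) := by
  induction n with
  | zero => exact continuous_const
  | succ n ih =>
    exact ih.max ((Continuous.inner continuous_const continuous_id).sub continuous_const)

lemma happrox_tendsto (hG : IsGFunction G) (hdense : DenseRange e) (y : Euc N) :
    Tendsto (fun n => happrox G e n y) atTop (nhds (fenchelConj G y)) := by
  have hb : BddAbove (range fun n => happrox G e n y) :=
    ⟨fenchelConj G y, by rintro z ⟨n, rfl⟩; exact happrox_le hG n y⟩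
  have ht := tendsto_atTop_ciSup (happrox_mono (G := G) (e := e) y) hb
  have heq : (⨆ n, happrox G e n y) = fenchelConj G y := by
    refine le_antisymm (ciSup_le fun n => happrox_le hG n y) (fc_ciSup_le fun x => ?_)
    set L := ⨆ n, happrox G e n y with hL
    have hclosed : IsClosed {x : Euc N | (inner ℝ x y : ℝ) - G x ≤ L} :=
      isClosed_le ((Continuous.inner continuous_id continuous_const).sub (G_cont hG))
        continuous_const
    have hsub : range e ⊆ {x : Euc N | (inner ℝ x y : ℝ) - G x ≤ L} := by
      rintro z ⟨n, rfl⟩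
      have h1 : (inner ℝ (e n) y : ℝ) - G (e n) ≤ happrox G e (n+1) y := le_max_right _ _
      exact h1.trans (le_ciSup hb (n+1))
    have hcl : closure (range e) ⊆ {x : Euc N | (inner ℝ x y : ℝ) - G x ≤ L} :=
      hclosed.closure_subset_iff.2 hsub
    have : x ∈ closure (range e) := by rw [hdense.closure_eq]; trivial
    exact hcl this
  rwa [heq] at ht

end GFunAux

open GFunAux

set_option maxHeartbeats 1000000 in
/-- A function in L¹ whose pairing with every step function is
controlled by M times the Luxemburg norm belongs to L^{G*} with norm at most M. -/
theorem dual_representation_bound {N : ℕ} (hN : 1 ≤ N) (G : Euc N → ℝ)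
    (hG : IsGFunction G)
    (I : Set ℝ) (a b : ℝ) (hab : a < b) (hI1 : Ioo a b ⊆ I) (hI2 : I ⊆ Icc a b)
    (v : ℝ → Euc N) (hv : IntegrableOn v I) (M : ℝ) (hM : 0 < M)
    (hpair : ∀ u : MeasureTheory.SimpleFunc ℝ (Euc N),
      (∫ t in I, (inner ℝ (u t) (v t) : ℝ)) ≤ M * luxNorm G I u) :
    (∫ t in I, fenchelConj G (M⁻¹ • v t)) ≤ 1 ∧
    MemLG (fenchelConj G) I v ∧
    luxNorm (fenchelConj G) I v ≤ M := by
  classical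
  have hIfin : volume I < ⊤ := lt_of_le_of_lt (measure_mono hI2) measure_Icc_lt_top
  haveI : IsFiniteMeasure (volume.restrict I) :=
    ⟨by rw [Measure.restrict_apply_univ]; exact hIfin⟩
  have hvm : AEStronglyMeasurable v (volume.restrict I) := hv.aestronglyMeasurable
  set v' := hvm.mk v with hv'def
  have hv'sm : StronglyMeasurable v' := hvm.stronglyMeasurable_mk
  have hvv' : v =ᵐ[volume.restrict I] v' := hvm.ae_eq_mk
  have hv' : IntegrableOn v' I := hv.congr hvv'
  set w := fun t => M⁻¹ • v' t with hwdef
  have hwmeas : Measurable w := (hv'sm.measurable).const_smul M⁻¹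
  obtain ⟨e, hdense⟩ : ∃ e : ℕ → Euc N, DenseRange e :=
    ⟨TopologicalSpace.denseSeq (Euc N), TopologicalSpace.denseRange_denseSeq (Euc N)⟩
  -- every composition of a simple function with any real function is integrable on I
  have simple_int : ∀ (u : SimpleFunc ℝ (Euc N)) (f : Euc N → ℝ),
      IntegrableOn (fun t => f (u t)) I := by
    intro u f
    obtain ⟨D, hD⟩ := ((u.map f).map (fun r => |r|)).exists_forall_le
    refine Integrable.mono' (integrable_const D) (u.map f).aestronglyMeasurable
      (ae_of_all _ fun t => ?_)
    rw [Real.norm_eq_abs]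
    simpa using hD t
  -- Luxemburg norm of a simple function is at most 1 + modular
  have lux_le : ∀ u : SimpleFunc ℝ (Euc N),
      luxNorm G I u ≤ 1 + ∫ t in I, G (u t) := by
    intro u
    set ρ := ∫ t in I, G (u t) with hρ
    have hρ0 : 0 ≤ ρ := integral_nonneg fun t => G_nonneg hG _
    have hα : (0:ℝ) < 1 + ρ := by linarith
    refine csInf_le ⟨0, fun x hx => le_of_lt hx.1⟩ ⟨hα, ?_⟩
    have hinv0 : (0:ℝ) ≤ (1+ρ)⁻¹ := inv_nonneg.2 hα.le
    have hinvc : (1+ρ)⁻¹ * (1+ρ) = 1 := inv_mul_cancel₀ hα.ne'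
    have hcle : (1+ρ)⁻¹ ≤ 1 := by nlinarith
    calc (∫ t in I, G ((1+ρ)⁻¹ • u t))
        ≤ ∫ t in I, (1+ρ)⁻¹ * G (u t) := by
          refine integral_mono (simple_int u (fun x => G ((1+ρ)⁻¹ • x))) ((simple_int u G).const_mul _)
            (fun t => G_smul_le hG hinv0 hcle (u t))
      _ = (1+ρ)⁻¹ * ρ := integral_const_mul _ _
      _ ≤ 1 := by nlinarith
  -- measurable selection: simple functions realizing the approximants
  have exist_u : ∀ n : ℕ, ∃ u : SimpleFunc ℝ (Euc N),
      ∀ t, happrox G e n (w t) ≤ (inner ℝ (u t) (w t) : ℝ) - G (u t) := by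
    intro n
    induction n with
    | zero =>
      refine ⟨SimpleFunc.const ℝ (0 : Euc N), fun t => ?_⟩
      simp [happrox, hG.1]
    | succ n ih =>
      obtain ⟨u, hu⟩ := ih
      have hmeasd : Measurable fun t => (inner ℝ (u t) (w t) : ℝ) - G (u t) :=
        (u.measurable.inner hwmeas).sub ((G_cont hG).measurable.comp u.measurable)
      have hmeasc : Measurable fun t => (inner ℝ (e n) (w t) : ℝ) - G (e n) :=
        (measurable_const.inner hwmeas).sub measurable_const
      have hA : MeasurableSet {t : ℝ | (inner ℝ (e n) (w t) : ℝ) - G (e n)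
          ≤ (inner ℝ (u t) (w t) : ℝ) - G (u t)} := measurableSet_le hmeasc hmeasd
      refine ⟨SimpleFunc.piecewise _ hA u (SimpleFunc.const ℝ (e n)), fun t => ?_⟩
      rw [SimpleFunc.piecewise_apply]
      show max (happrox G e n (w t)) _ ≤ _
      split_ifs with ht
      · exact max_le (hu t) ht
      · have ht' : (inner ℝ (u t) (w t) : ℝ) - G (u t)
            < (inner ℝ (e n) (w t) : ℝ) - G (e n) := not_le.mp ht
        simp only [SimpleFunc.coe_const, Function.const_apply]
        exact max_le ((hu t).trans ht'.le) le_rfl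
  -- key estimate
  have key : ∀ n : ℕ, IntegrableOn (fun t => happrox G e n (w t)) I ∧
      (∫ t in I, happrox G e n (w t)) ≤ 1 := by
    intro n
    obtain ⟨u, hu⟩ := exist_u n
    obtain ⟨C, hC⟩ := (u.map (fun x : Euc N => ‖x‖)).exists_forall_le
    have hC' : ∀ t, ‖u t‖ ≤ C := fun t => by simpa using hC t
    have hint1 : IntegrableOn (fun t => (inner ℝ (u t) (v' t) : ℝ)) I := by
      refine Integrable.mono' (hv'.norm.const_mul C)
        (AEStronglyMeasurable.inner u.aestronglyMeasurable hv'.aestronglyMeasurable)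
        (ae_of_all _ fun t => ?_)
      calc ‖(inner ℝ (u t) (v' t) : ℝ)‖ ≤ ‖u t‖ * ‖v' t‖ := norm_inner_le_norm _ _
        _ ≤ C * ‖v' t‖ := mul_le_mul_of_nonneg_right (hC' t) (norm_nonneg _)
    have hiwe : (fun t => (inner ℝ (u t) (w t) : ℝ))
        = fun t => M⁻¹ * (inner ℝ (u t) (v' t) : ℝ) := by
      funext t
      rw [hwdef]
      exact real_inner_smul_right _ _ _
    have hintw : IntegrableOn (fun t => (inner ℝ (u t) (w t) : ℝ)) I := by
      rw [hiwe]; exact hint1.const_mul _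
    have hint2 : IntegrableOn (fun t => G (u t)) I := simple_int u G
    have hint3 : IntegrableOn (fun t => happrox G e n (w t)) I := by
      refine Integrable.mono' hintw.norm
        ((happrox_cont hG n).comp_aestronglyMeasurable hwmeas.aestronglyMeasurable)
        (ae_of_all _ fun t => ?_)
      rw [Real.norm_eq_abs, abs_of_nonneg (happrox_nonneg n (w t))]
      have h1 := hu t
      have h2 := G_nonneg hG (u t)
      have h3 := le_abs_self ((inner ℝ (u t) (w t) : ℝ))
      rw [Real.norm_eq_abs]
      linarith
    refine ⟨hint3, ?_⟩
    have hmono : (∫ t in I, happrox G e n (w t))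
        ≤ ∫ t in I, ((inner ℝ (u t) (w t) : ℝ) - G (u t)) :=
      integral_mono hint3 (hintw.sub hint2) hu
    have hsplit : (∫ t in I, ((inner ℝ (u t) (w t) : ℝ) - G (u t)))
        = (∫ t in I, (inner ℝ (u t) (w t) : ℝ)) - ∫ t in I, G (u t) :=
      integral_sub hintw hint2
    have hww : (∫ t in I, (inner ℝ (u t) (w t) : ℝ))
        = M⁻¹ * ∫ t in I, (inner ℝ (u t) (v' t) : ℝ) := by
      rw [hiwe]; exact integral_const_mul _ _
    have hvv : (∫ t in I, (inner ℝ (u t) (v' t) : ℝ))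
        = ∫ t in I, (inner ℝ (u t) (v t) : ℝ) :=
      (integral_congr_ae (hvv'.mono fun t ht => by rw [ht])).symm
    set ρ := ∫ t in I, G (u t) with hρ
    have hρ0 : 0 ≤ ρ := integral_nonneg fun t => G_nonneg hG _
    have h5 : (∫ t in I, (inner ℝ (u t) (v t) : ℝ)) ≤ M * (1 + ρ) :=
      (hpair u).trans (mul_le_mul_of_nonneg_left (lux_le u) hM.le)
    have h6 : M⁻¹ * (∫ t in I, (inner ℝ (u t) (v' t) : ℝ)) ≤ 1 + ρ := by
      rw [hvv]
      calc M⁻¹ * (∫ t in I, (inner ℝ (u t) (v t) : ℝ))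
          ≤ M⁻¹ * (M * (1 + ρ)) :=
            mul_le_mul_of_nonneg_left h5 (inv_nonneg.2 hM.le)
        _ = 1 + ρ := by field_simp
    rw [hsplit, hww] at hmono
    linarith
  -- monotone convergence
  set F := fun t => fenchelConj G (w t) with hFdef
  have hFmeas : Measurable F := (fc_cont hG).measurable.comp hwmeas
  have hFnn : ∀ t, 0 ≤ F t := fun t => fc_nonneg hG _
  have hφmeas : ∀ n, Measurable fun t => ENNReal.ofReal (happrox G e n (w t)) :=
    fun n => ((happrox_cont hG n).measurable.comp hwmeas).ennreal_ofReal
  have hφmono : Monotone fun n => (fun t => ENNReal.ofReal (happrox G e n (w t))) :=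
    fun m n hmn t => ENNReal.ofReal_le_ofReal (happrox_mono (w t) hmn)
  have hsup : ∀ t, (⨆ n, ENNReal.ofReal (happrox G e n (w t))) = ENNReal.ofReal (F t) := by
    intro t
    have h2 : Tendsto (fun n => ENNReal.ofReal (happrox G e n (w t))) atTop
        (nhds (ENNReal.ofReal (F t))) :=
      (ENNReal.continuous_ofReal.tendsto _).comp (happrox_tendsto hG hdense (w t))
    have h3 : Tendsto (fun n => ENNReal.ofReal (happrox G e n (w t))) atTop
        (nhds (⨆ n, ENNReal.ofReal (happrox G e n (w t)))) :=
      tendsto_atTop_iSup (fun m n hmn => ENNReal.ofReal_le_ofReal (happrox_mono (w t) hmn))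
    exact tendsto_nhds_unique h3 h2
  have hlsup : (∫⁻ t in I, ENNReal.ofReal (F t)) ≤ 1 := by
    have hls := lintegral_iSup hφmeas hφmono (μ := volume.restrict I)
    have heq : (∫⁻ t in I, ENNReal.ofReal (F t))
        = ⨆ n, ∫⁻ t in I, ENNReal.ofReal (happrox G e n (w t)) := by
      rw [← hls]
      exact lintegral_congr fun t => (hsup t).symm
    rw [heq]
    refine iSup_le fun n => ?_
    rw [← ofReal_integral_eq_lintegral_ofReal (key n).1
      (ae_of_all _ fun t => happrox_nonneg n (w t))]
    exact ENNReal.ofReal_le_one.2 (key n).2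
  have hFint : IntegrableOn F I := by
    refine ⟨hFmeas.aestronglyMeasurable, ?_⟩
    rw [hasFiniteIntegral_iff_norm]
    have : (∫⁻ t in I, ENNReal.ofReal ‖F t‖) = ∫⁻ t in I, ENNReal.ofReal (F t) :=
      lintegral_congr fun t => by rw [Real.norm_of_nonneg (hFnn t)]
    rw [this]
    exact lt_of_le_of_lt hlsup ENNReal.one_lt_top
  have hFle : (∫ t in I, F t) ≤ 1 := by
    rw [integral_eq_lintegral_of_nonneg_ae (ae_of_all _ hFnn) hFmeas.aestronglyMeasurable]
    refine ENNReal.toReal_le_of_le_ofReal zero_le_one ?_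
    rwa [ENNReal.ofReal_one]
  have hFv : (fun t => fenchelConj G (M⁻¹ • v t)) =ᵐ[volume.restrict I] F :=
    hvv'.mono fun t ht => by simp only [hFdef, hwdef]; rw [ht]
  have goal1 : (∫ t in I, fenchelConj G (M⁻¹ • v t)) ≤ 1 := by
    rw [integral_congr_ae hFv]; exact hFle
  refine ⟨goal1, ⟨hvm, ?_⟩, ?_⟩
  · obtain ⟨A, B, hA, hB, hsc⟩ := fc_scale hG M hM.le
    have hFvint : IntegrableOn (fun t => fenchelConj G (M⁻¹ • v t)) I :=
      hFint.congr hFv.symm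
    refine Integrable.mono' (((hv.smul M⁻¹).norm.const_mul A).add (hFvint.const_mul B))
      ((fc_cont hG).comp_aestronglyMeasurable hvm) (ae_of_all _ fun t => ?_)
    rw [Real.norm_of_nonneg (fc_nonneg hG _)]
    have hv_eq : v t = M • (M⁻¹ • v t) := by
      rw [smul_smul, mul_inv_cancel₀ hM.ne', one_smul]
    calc fenchelConj G (v t) = fenchelConj G (M • (M⁻¹ • v t)) := by rw [← hv_eq]
      _ ≤ A * ‖M⁻¹ • v t‖ + B * fenchelConj G (M⁻¹ • v t) := hsc _
      _ ≤ A * ‖(M⁻¹ • v) t‖ + B * fenchelConj G (M⁻¹ • v t) := le_refl _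
  · exact csInf_le ⟨0, fun x hx => le_of_lt hx.1⟩ ⟨hM, goal1⟩


end
end

section
/- (Sobolev inequality) Let G : ℝ^N → ℝ be an admissible G-function and I = [a,b] a compact nondegenerate interval. Let u : I → ℝ^N be absolutely continuous with u(t) = u(a) + ∫_a^t u̇(s) ds for all t ∈ I, where u̇ ∈ L^G(I,ℝ^N), and set u_I = (1/(b−a)) ∫_I u(t) dt. Then ‖u − u_I‖_G ≤ (b − a) ‖u̇‖_G. -/
open MeasureTheory Filter Set

noncomputable section

/-! ### Auxiliary lemmas -/

lemma gfun_nonneg {N : ℕ} {G : Euc N → ℝ} (hG : IsGFunction G) (x : Euc N) : 0 ≤ G x := by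
  obtain ⟨h0, hconv, heven, -⟩ := hG
  have h := hconv.2 (mem_univ x) (mem_univ (-x)) (by norm_num : (0:ℝ) ≤ 1/2)
    (by norm_num : (0:ℝ) ≤ 1/2) (by norm_num)
  have hx : (1/2 : ℝ) • x + (1/2 : ℝ) • (-x) = 0 := by
    rw [smul_neg]; abel
  rw [hx, h0, heven] at h
  simp only [smul_eq_mul] at h
  linarith

lemma gfun_cont {N : ℕ} {G : Euc N → ℝ} (hG : IsGFunction G) : Continuous G := by
  have := hG.2.1.continuousOn isOpen_univ
  exact continuousOn_univ.mp this

lemma gfun_smul_le {N : ℕ} {G : Euc N → ℝ} (hG : IsGFunction G) {r : ℝ} (h0 : 0 ≤ r)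
    (h1 : r ≤ 1) (x : Euc N) : G (r • x) ≤ r * G x := by
  have h := hG.2.1.2 (mem_univ x) (mem_univ (0 : Euc N)) h0 (by linarith : (0:ℝ) ≤ 1 - r)
    (by ring)
  rw [smul_zero, add_zero, hG.1] at h
  simpa using h

/-- Δ₂-type integrability: `G (λ • f)` is integrable whenever `G ∘ f` is. -/
lemma gfun_integrable_smul {N : ℕ} {G : Euc N → ℝ} (hG : IsGFunction G) {f : ℝ → Euc N}
    {s : Set ℝ} (hfin : volume s < ⊤)
    (hmeas : AEStronglyMeasurable f (volume.restrict s))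
    (hint : IntegrableOn (fun t => G (f t)) s) {lam : ℝ} (hl : 0 < lam) :
    IntegrableOn (fun t => G (lam • f t)) s := by
  obtain ⟨K₁, hK₁, M₁, hM₁, hΔ⟩ := hG.2.2.2.2.1
  obtain ⟨C, hC⟩ := (isCompact_closedBall (0 : Euc N) (2 * M₁)).exists_bound_of_continuousOn
    (gfun_cont hG).continuousOn
  have hC0 : 0 ≤ C := by
    have := hC 0 (by simp [hM₁.le])
    exact le_trans (norm_nonneg _) this
  have key : ∀ x : Euc N, G ((2:ℝ) • x) ≤ K₁ * G x + C := by
    intro x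
    by_cases hx : M₁ ≤ ‖x‖
    · have := hΔ x hx
      linarith
    · push_neg at hx
      have h2x : (2:ℝ) • x ∈ Metric.closedBall (0 : Euc N) (2 * M₁) := by
        simp only [Metric.mem_closedBall, dist_zero_right, norm_smul, Real.norm_ofNat]
        nlinarith [norm_nonneg x]
      have := hC _ h2x
      have h1 : G ((2:ℝ) • x) ≤ C := le_trans (le_abs_self _) this
      have h2 : 0 ≤ K₁ * G x := mul_nonneg (by linarith) (gfun_nonneg hG x)
      linarith
  have main : ∀ n : ℕ, IntegrableOn (fun t => G ((2 ^ n : ℝ) • f t)) s := by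
    intro n
    induction n with
    | zero => simpa using hint
    | succ n ih =>
      have hmeas' : AEStronglyMeasurable (fun t => G ((2 ^ (n+1) : ℝ) • f t))
          (volume.restrict s) :=
        (gfun_cont hG).comp_aestronglyMeasurable (hmeas.const_smul (2 ^ (n+1) : ℝ))
      have hconstC : IntegrableOn (fun _ : ℝ => C) s := integrableOn_const hfin.ne
      have hmaj : IntegrableOn (fun x => K₁ * G ((2 ^ n : ℝ) • f x) + C) s :=
        (ih.const_mul K₁).add hconstC
      refine hmaj.mono' hmeas' ?_
      filter_upwards with t
      have heq : (2 ^ (n+1) : ℝ) • f t = (2:ℝ) • ((2 ^ n : ℝ) • f t) := by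
        rw [smul_smul]; ring_nf
      rw [Real.norm_eq_abs, abs_of_nonneg (gfun_nonneg hG _), heq]
      exact key _
  obtain ⟨n, hn⟩ := pow_unbounded_of_one_lt lam (by norm_num : (1:ℝ) < 2)
  have h2n : (0:ℝ) < 2 ^ n := by positivity
  refine Integrable.mono' (main n)
    ((gfun_cont hG).comp_aestronglyMeasurable (hmeas.const_smul lam)) ?_
  filter_upwards with t
  rw [Real.norm_eq_abs, abs_of_nonneg (gfun_nonneg hG _)]
  have heq : lam • f t = (lam / 2 ^ n) • ((2 ^ n : ℝ) • f t) := by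
    rw [smul_smul, div_mul_cancel₀]; exact h2n.ne'
  rw [heq]
  calc G ((lam / 2 ^ n) • ((2 ^ n : ℝ) • f t))
      ≤ (lam / 2 ^ n) * G ((2 ^ n : ℝ) • f t) :=
        gfun_smul_le hG (by positivity) (by rw [div_le_one h2n]; exact hn.le) _
    _ ≤ 1 * G ((2 ^ n : ℝ) • f t) := by
        apply mul_le_mul_of_nonneg_right _ (gfun_nonneg hG _)
        rw [div_le_one h2n]; exact hn.le
    _ = G ((2 ^ n : ℝ) • f t) := one_mul _

/-- Key bound: `G ((b-a)⁻¹ • ∫ s..t v) ≤ (b-a)⁻¹` when the modular of `v` is ≤ 1. -/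
lemma gfun_key {N : ℕ} {G : Euc N → ℝ} (hG : IsGFunction G) {v : ℝ → Euc N} {a b : ℝ}
    (hab : a < b) (hvi : IntegrableOn v (Icc a b))
    (hGv : IntegrableOn (fun t => G (v t)) (Icc a b))
    (hmod : (∫ t in Icc a b, G (v t)) ≤ 1) {s t : ℝ} (hs : s ∈ Icc a b) (ht : t ∈ Icc a b) :
    G ((b - a)⁻¹ • ∫ x in s..t, v x) ≤ (b - a)⁻¹ := by
  have hba : (0:ℝ) < b - a := by linarith
  have main : ∀ s t : ℝ, s ∈ Icc a b → t ∈ Icc a b → s ≤ t →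
      G ((b - a)⁻¹ • ∫ x in s..t, v x) ≤ (b - a)⁻¹ := by
    intro s t hs ht hst
    rcases eq_or_lt_of_le hst with rfl | hlt
    · simp [hG.1, (inv_nonneg.2 hba.le : (0:ℝ) ≤ (b-a)⁻¹)]
    have hL : (0:ℝ) < t - s := by linarith
    have hsub : Ioc s t ⊆ Icc a b := fun x hx => ⟨le_trans hs.1 hx.1.le, le_trans hx.2 ht.2⟩
    have hμ : volume (Ioc s t) = ENNReal.ofReal (t - s) := Real.volume_Ioc
    set μ' : Measure ℝ := volume.restrict (Ioc s t) with hμ'def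
    haveI : IsFiniteMeasure μ' := by
      constructor
      rw [hμ'def, Measure.restrict_apply_univ, hμ]
      exact ENNReal.ofReal_lt_top
    haveI : NeZero μ' := by
      constructor
      intro h
      have : μ' univ = 0 := by rw [h]; simp
      rw [hμ'def, Measure.restrict_apply_univ, hμ] at this
      simp [ENNReal.ofReal_eq_zero] at this
      linarith
    have hvi' : Integrable v μ' := hvi.mono_set hsub
    have hGvi' : Integrable (fun x => G (v x)) μ' := hGv.mono_set hsub
    have jensen : G (⨍ x, v x ∂μ') ≤ ⨍ x, G (v x) ∂μ' := by
      have := hG.2.1.map_average_le (μ := μ') (f := v) (gfun_cont hG).continuousOn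
        isClosed_univ (Filter.Eventually.of_forall fun _ => mem_univ _) hvi' hGvi'
      exact this
    have htoReal : (μ' univ).toReal = t - s := by
      rw [hμ'def, Measure.restrict_apply_univ, hμ, ENNReal.toReal_ofReal hL.le]
    have havg : ⨍ x, v x ∂μ' = (t - s)⁻¹ • ∫ x in Ioc s t, v x := by
      rw [average_eq, measureReal_def, htoReal]
    have havgG : ⨍ x, G (v x) ∂μ' = (t - s)⁻¹ * ∫ x in Ioc s t, G (v x) := by
      rw [average_eq, measureReal_def, htoReal]; simp [smul_eq_mul]; exact Or.inl rfl
    have hratio0 : (0:ℝ) ≤ (t - s) / (b - a) := by positivity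
    have hratio1 : (t - s) / (b - a) ≤ 1 := by
      rw [div_le_one hba]
      rcases hs with ⟨hs1, hs2⟩; rcases ht with ⟨ht1, ht2⟩
      linarith
    have hrw : (b - a)⁻¹ • (∫ x in s..t, v x) =
        ((t - s) / (b - a)) • ((t - s)⁻¹ • ∫ x in Ioc s t, v x) := by
      rw [intervalIntegral.integral_of_le hst, smul_smul]
      congr 1
      field_simp
    have hIoc_le : (∫ x in Ioc s t, G (v x)) ≤ ∫ x in Icc a b, G (v x) := by
      apply setIntegral_mono_set hGv
      · filter_upwards with x using gfun_nonneg hG _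
      · exact HasSubset.Subset.eventuallyLE hsub
    calc G ((b - a)⁻¹ • ∫ x in s..t, v x)
        = G (((t - s) / (b - a)) • ((t - s)⁻¹ • ∫ x in Ioc s t, v x)) := by rw [hrw]
      _ ≤ ((t - s) / (b - a)) * G ((t - s)⁻¹ • ∫ x in Ioc s t, v x) :=
          gfun_smul_le hG hratio0 hratio1 _
      _ ≤ ((t - s) / (b - a)) * ((t - s)⁻¹ * ∫ x in Ioc s t, G (v x)) := by
          apply mul_le_mul_of_nonneg_left _ hratio0
          rw [← havg, ← havgG]; exact jensen
      _ = (b - a)⁻¹ * ∫ x in Ioc s t, G (v x) := by field_simp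
      _ ≤ (b - a)⁻¹ * 1 := by
          apply mul_le_mul_of_nonneg_left _ (inv_nonneg.2 hba.le)
          exact le_trans hIoc_le hmod
      _ = (b - a)⁻¹ := mul_one _
  rcases le_total s t with h | h
  · exact main s t hs ht h
  · have := main t s ht hs h
    rwa [intervalIntegral.integral_symm, smul_neg, hG.2.2.1]

/-- Sobolev inequality ‖u − u_I‖_G ≤ (b − a) ‖u̇‖_G. -/
theorem sobolev_inequality {N : ℕ} (hN : 1 ≤ N) (G : Euc N → ℝ) (hG : IsGFunction G)
    (a b : ℝ) (hab : a < b) (u du : ℝ → Euc N)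
    (hdu : MemLG G (Icc a b) du) (hint : IntegrableOn du (Icc a b))
    (hu : ∀ t ∈ Icc a b, u t = u a + ∫ s in a..t, du s) :
    luxNorm G (Icc a b)
        (fun t => u t - (b - a)⁻¹ • ∫ s in Icc a b, u s) ≤
      (b - a) * luxNorm G (Icc a b) du := by
  have hba : (0:ℝ) < b - a := by linarith
  set I : Set ℝ := Icc a b with hIdef
  have hIfin : volume I < ⊤ := by
    rw [hIdef, Real.volume_Icc]; exact ENNReal.ofReal_lt_top
  have hItoReal : (volume I).toReal = b - a := by
    rw [hIdef, Real.volume_Icc, ENNReal.toReal_ofReal hba.le]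
  -- continuity and integrability of u on I
  have hUc : ContinuousOn (fun t => u a + ∫ x in a..t, du x) I := by
    apply continuousOn_const.add
    have : IntegrableOn du (uIcc a b) := by rwa [uIcc_of_le hab.le]
    have h := intervalIntegral.continuousOn_primitive_interval this
    rwa [uIcc_of_le hab.le] at h
  have huc : ContinuousOn u I := hUc.congr hu
  have hui : IntegrableOn u I := huc.integrableOn_Icc
  set m : Euc N := ∫ s in I, u s with hm
  set w : ℝ → Euc N := fun t => u t - (b - a)⁻¹ • m with hw
  set S := {α : ℝ | 0 < α ∧ (∫ t in I, G (α⁻¹ • du t)) ≤ 1} with hS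
  set T := {α : ℝ | 0 < α ∧ (∫ t in I, G (α⁻¹ • w t)) ≤ 1} with hT
  have hT_bdd : BddBelow T := ⟨0, fun x hx => hx.1.le⟩
  -- S is nonempty
  have hS_ne : S.Nonempty := by
    set α₀ : ℝ := max 1 (∫ t in I, G (du t)) with hα₀
    have hα₀1 : (1:ℝ) ≤ α₀ := le_max_left _ _
    have hα₀pos : (0:ℝ) < α₀ := lt_of_lt_of_le one_pos hα₀1
    refine ⟨α₀, hα₀pos, ?_⟩
    have hinv1 : α₀⁻¹ ≤ 1 := inv_le_one_of_one_le₀ hα₀1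
    have hinv0 : 0 ≤ α₀⁻¹ := inv_nonneg.2 hα₀pos.le
    have hGi : IntegrableOn (fun t => G (α₀⁻¹ • du t)) I :=
      gfun_integrable_smul hG hIfin hdu.1 hdu.2 (inv_pos.2 hα₀pos)
    calc (∫ t in I, G (α₀⁻¹ • du t)) ≤ ∫ t in I, α₀⁻¹ * G (du t) := by
          apply setIntegral_mono_on hGi (hdu.2.const_mul _) measurableSet_Icc
          intro t _
          exact gfun_smul_le hG hinv0 hinv1 _
      _ = α₀⁻¹ * ∫ t in I, G (du t) := by rw [integral_const_mul]
      _ ≤ α₀⁻¹ * α₀ := by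
          apply mul_le_mul_of_nonneg_left (le_max_right _ _) hinv0
      _ = 1 := inv_mul_cancel₀ hα₀pos.ne'
  -- Main step
  have hmain : ∀ α ∈ S, (b - a) * α ∈ T := by
    rintro α ⟨hαpos, hαmod⟩
    set β : ℝ := (b - a) * α with hβ
    have hβpos : 0 < β := mul_pos hba hαpos
    set v : ℝ → Euc N := fun t => α⁻¹ • du t with hv
    have hvi : IntegrableOn v I := hint.smul α⁻¹
    have hGvi : IntegrableOn (fun t => G (v t)) I :=
      gfun_integrable_smul hG hIfin hdu.1 hdu.2 (inv_pos.2 hαpos)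
    -- pointwise bound over pairs
    have hpair : ∀ t ∈ I, ∀ s ∈ I, G (β⁻¹ • (u t - u s)) ≤ (b - a)⁻¹ := by
      intro t ht s hs
      have hiiT : IntervalIntegrable du volume a t := by
        apply IntegrableOn.intervalIntegrable
        rw [uIcc_of_le ht.1]
        exact hint.mono_set (Icc_subset_Icc le_rfl ht.2)
      have hiiS : IntervalIntegrable du volume a s := by
        apply IntegrableOn.intervalIntegrable
        rw [uIcc_of_le hs.1]
        exact hint.mono_set (Icc_subset_Icc le_rfl hs.2)
      have hsub : u t - u s = ∫ x in s..t, du x := by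
        rw [hu t ht, hu s hs]
        rw [add_sub_add_left_eq_sub]
        exact intervalIntegral.integral_interval_sub_left hiiT hiiS
      have hsmul : β⁻¹ • (u t - u s) = (b - a)⁻¹ • ∫ x in s..t, v x := by
        rw [hsub, hv]
        simp only [intervalIntegral.integral_smul]
        rw [smul_smul, hβ, mul_inv, mul_comm (b-a)⁻¹ α⁻¹]
      rw [hsmul]
      exact gfun_key hG hab hvi hGvi hαmod hs ht
    -- Jensen over s for each fixed t
    have hpt : ∀ t ∈ I, G (β⁻¹ • w t) ≤ (b - a)⁻¹ := by
      intro t ht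
      set μI : Measure ℝ := volume.restrict I with hμI
      haveI : IsFiniteMeasure μI := by
        constructor; rw [hμI, Measure.restrict_apply_univ]; exact hIfin
      haveI : NeZero μI := by
        constructor
        intro h
        have : μI univ = 0 := by rw [h]; simp
        rw [hμI, Measure.restrict_apply_univ, hIdef, Real.volume_Icc] at this
        simp [ENNReal.ofReal_eq_zero] at this
        linarith
      set f : ℝ → Euc N := fun s => β⁻¹ • (u t - u s) with hf
      have hfi : Integrable f μI := by
        exact ((integrableOn_const (C := u t) hIfin.ne).sub hui).smul β⁻¹
      have hGfc : ContinuousOn (fun s => G (f s)) I := by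
        apply (gfun_cont hG).comp_continuousOn
        exact ((continuousOn_const (c := u t)).sub huc).const_smul β⁻¹
      have hGfi : Integrable (fun s => G (f s)) μI := hGfc.integrableOn_Icc
      have jensen : G (⨍ s, f s ∂μI) ≤ ⨍ s, G (f s) ∂μI :=
        hG.2.1.map_average_le (gfun_cont hG).continuousOn isClosed_univ
          (Filter.Eventually.of_forall fun _ => mem_univ _) hfi hGfi
      have havg : (⨍ s, f s ∂μI) = β⁻¹ • w t := by
        rw [average_eq]
        have h1 : (∫ s, f s ∂μI) = β⁻¹ • ((b - a) • u t - m) := by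
          rw [hf]
          rw [integral_smul]
          congr 1
          rw [integral_sub (integrableOn_const (C := u t) hIfin.ne) hui]
          congr 1
          rw [setIntegral_const, measureReal_def, hItoReal]
        rw [h1, measureReal_def, Measure.restrict_apply_univ, hItoReal, hw]
        rw [smul_comm]
        congr 1
        rw [smul_sub, smul_smul, inv_mul_cancel₀ hba.ne', one_smul]
      have havgG : (⨍ s, G (f s) ∂μI) ≤ (b - a)⁻¹ := by
        rw [average_eq, measureReal_def, Measure.restrict_apply_univ, hItoReal, smul_eq_mul]
        have hIntle : (∫ s, G (f s) ∂μI) ≤ ∫ _ in I, (b - a)⁻¹ := by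
          apply setIntegral_mono_on hGfi (integrableOn_const hIfin.ne)
            measurableSet_Icc
          intro s hs
          exact hpair t ht s hs
        have hconst : (∫ _ in I, (b - a)⁻¹ : ℝ) = (b - a) * (b - a)⁻¹ := by
          rw [setIntegral_const, measureReal_def, hItoReal, smul_eq_mul]
        rw [hconst] at hIntle
        calc (b - a)⁻¹ * ∫ s, G (f s) ∂μI ≤ (b - a)⁻¹ * ((b - a) * (b - a)⁻¹) :=
              mul_le_mul_of_nonneg_left hIntle (inv_nonneg.2 hba.le)
          _ = (b - a)⁻¹ := by field_simp
      calc G (β⁻¹ • w t) = G (⨍ s, f s ∂μI) := by rw [havg]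
        _ ≤ ⨍ s, G (f s) ∂μI := jensen
        _ ≤ (b - a)⁻¹ := havgG
    -- integrate over t
    refine ⟨hβpos, ?_⟩
    have hwG : ContinuousOn (fun t => G (β⁻¹ • w t)) I := by
      apply (gfun_cont hG).comp_continuousOn
      exact ((huc.sub (continuousOn_const (c := (b - a)⁻¹ • m))).const_smul β⁻¹)
    have := setIntegral_mono_on (hwG.integrableOn_Icc)
      (integrableOn_const hIfin.ne) measurableSet_Icc (fun t ht => hpt t ht)
    calc (∫ t in I, G (β⁻¹ • w t)) ≤ ∫ _ in I, (b - a)⁻¹ := this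
      _ = 1 := by rw [setIntegral_const, measureReal_def, hItoReal, smul_eq_mul, mul_inv_cancel₀ hba.ne']
  -- conclude
  have h1 : ∀ α ∈ S, sInf T ≤ (b - a) * α := fun α hα => csInf_le hT_bdd (hmain α hα)
  have h2 : (b - a)⁻¹ * sInf T ≤ sInf S := by
    apply le_csInf hS_ne
    intro α hα
    rw [inv_mul_le_iff₀ hba]
    exact h1 α hα
  have : luxNorm G I w = sInf T := rfl
  show sInf T ≤ (b - a) * sInf S
  have h3 := mul_le_mul_of_nonneg_left h2 hba.le
  rwa [← mul_assoc, mul_inv_cancel₀ hba.ne', one_mul] at h3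

end
end

section
/- (Directional derivative of the principal part, general Lagrangian) Let G : ℝ^N → ℝ be an admissible G-function of class C¹ with gradient ∇G and Fenchel conjugate G*, and let I = [a,b] be a compact nondegenerate interval. Let F : I × ℝ^N × ℝ^N → ℝ be of class C¹, with F_x(t,x,v) and F_v(t,x,v) denoting the gradients of F with respect to its second and third arguments, and suppose there are a continuous function a : [0,∞) → [0,∞) and nonnegative b, c ∈ L¹(I,ℝ) such that for all (t,x,v): (F2) |F(t,x,v)| ≤ a(|x|)(b(t) + G(v)); (F3) |F_x(t,x,v)| ≤ a(|x|)(b(t) + G(v)); (F4) G*(F_v(t,x,v)) ≤ a(|x|)(c(t) + G*(∇G(v))). Let u, φ : I → ℝ^N be absolutely continuous with u(t) = u(a) + ∫_a^t u̇ and φ(t) = φ(a) + ∫_a^t φ̇, where u, u̇, φ, φ̇ ∈ L^G(I,ℝ^N). Then for every s ∈ [−1,1] the integral ψ(s) = ∫_I F(t, u(t) + s·φ(t), u̇(t) + s·φ̇(t)) dt is finite, and ψ is differentiable at s = 0 with ψ'(0) = ∫_I [⟨F_x(t,u(t),u̇(t)), φ(t)⟩ + ⟨F_v(t,u(t),u̇(t)),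 φ̇(t)⟩] dt, both integrands being integrable on I. -/
open MeasureTheory Filter Set
open Topology

noncomputable section

/-! ### Auxiliary lemmas -/

lemma aux_Gnonneg {N : ℕ} {G : Euc N → ℝ} (h0 : G 0 = 0) (hc : ConvexOn ℝ Set.univ G)
    (he : ∀ x, G (-x) = G x) (x : Euc N) : 0 ≤ G x := by
  have := hc.2 (mem_univ x) (mem_univ (-x)) (by norm_num : (0:ℝ) ≤ (1/2:ℝ))
    (by norm_num : (0:ℝ) ≤ (1/2:ℝ)) (by norm_num)
  have hx : (1/2:ℝ) • x + (1/2:ℝ) • (-x) = (0 : Euc N) := by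
    rw [smul_neg, add_neg_cancel]
  simp only [smul_eq_mul] at this
  rw [hx, h0, he] at this
  linarith

lemma aux_Gsmul_le {N : ℕ} {G : Euc N → ℝ} (hc : ConvexOn ℝ Set.univ G)
    (he : ∀ x, G (-x) = G x) {l : ℝ} (hl : |l| ≤ 1) (x : Euc N) : G (l • x) ≤ G x := by
  have h1 : (0:ℝ) ≤ (1+l)/2 := by cases' abs_le.1 hl with h _; linarith
  have h2 : (0:ℝ) ≤ (1-l)/2 := by cases' abs_le.1 hl with _ h; linarith
  have := hc.2 (mem_univ x) (mem_univ (-x)) h1 h2 (by ring)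
  have hx : ((1+l)/2 : ℝ) • x + ((1-l)/2 : ℝ) • (-x) = l • x := by
    rw [smul_neg]
    rw [← sub_eq_add_neg, ← sub_smul]
    ring_nf
  simp only [smul_eq_mul] at this
  rw [hx, he] at this
  calc G (l • x) ≤ ((1+l)/2) * G x + ((1-l)/2) * G x := this
    _ = G x := by ring

lemma aux_subgrad {N : ℕ} {G : Euc N → ℝ} (hc : ConvexOn ℝ Set.univ G)
    {g v : Euc N} (hg : HasGradientAt G g v) (x : Euc N) :
    G v + (inner ℝ g (x - v) : ℝ) ≤ G x := by
  have hline : HasDerivAt (fun θ : ℝ => v + θ • (x - v)) (x - v) 0 := by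
    simpa using ((hasDerivAt_id (0:ℝ)).smul_const (x - v)).const_add v
  have hf : HasDerivAt (fun θ : ℝ => G (v + θ • (x - v))) ((inner ℝ g (x - v)) : ℝ) 0 := by
    have hg' : HasFDerivAt G ((InnerProductSpace.toDual ℝ (Euc N)) g) (v + (0:ℝ) • (x - v)) := by
      simpa using hasGradientAt_iff_hasFDerivAt.1 hg
    have := hg'.comp_hasDerivAt 0 hline
    exact this
  have hslope : Tendsto (fun θ : ℝ => (G (v + θ • (x - v)) - G v) / θ)
      (𝓝[>] (0:ℝ)) (𝓝 ((inner ℝ g (x - v)) : ℝ)) := by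
    have h := hasDerivAt_iff_tendsto_slope.1 hf
    have h2 := h.mono_left (nhdsWithin_mono _ (fun θ (hθ : θ ∈ Ioi (0:ℝ)) => ne_of_gt hθ))
    refine h2.congr' ?_
    filter_upwards [self_mem_nhdsWithin] with θ hθ
    simp [slope_def_field]
  have hub : ∀ᶠ θ in 𝓝[>] (0:ℝ), (G (v + θ • (x - v)) - G v) / θ ≤ G x - G v := by
    filter_upwards [Ioo_mem_nhdsGT_of_mem (by norm_num : (0:ℝ) ∈ Ico (0:ℝ) 1)] with θ hθ
    obtain ⟨h0, h1⟩ := hθ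
    have hcomb := hc.2 (mem_univ v) (mem_univ x) (by linarith : (0:ℝ) ≤ 1 - θ)
      (le_of_lt h0) (by ring)
    have heq : (1 - θ) • v + θ • x = v + θ • (x - v) := by
      rw [smul_sub, sub_smul, one_smul]; abel
    rw [heq] at hcomb
    simp only [smul_eq_mul] at hcomb
    rw [div_le_iff₀ h0]
    nlinarith
  have := le_of_tendsto hslope hub
  linarith

lemma aux_conj_bdd {N : ℕ} {G : Euc N → ℝ}
    (hnn : ∀ x, 0 ≤ G x)
    (hco : ∀ C : ℝ, ∃ R : ℝ, ∀ x : Euc N, R ≤ ‖x‖ → C * ‖x‖ ≤ G x) (y : Euc N) :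
    BddAbove (Set.range fun x : Euc N => ((inner ℝ x y : ℝ) - G x)) := by
  obtain ⟨R, hR⟩ := hco ‖y‖
  refine ⟨max 0 (|R| * ‖y‖), ?_⟩
  rintro _ ⟨x, rfl⟩
  show (inner ℝ x y : ℝ) - G x ≤ max 0 (|R| * ‖y‖)
  rcases le_total R ‖x‖ with h | h
  · have h1 := hR x h
    have h2 : (inner ℝ x y : ℝ) ≤ ‖x‖ * ‖y‖ := real_inner_le_norm x y
    refine le_max_of_le_left ?_
    nlinarith [norm_nonneg x, norm_nonneg y]
  · have h2 : (inner ℝ x y : ℝ) ≤ ‖x‖ * ‖y‖ := real_inner_le_norm x y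
    refine le_max_of_le_right ?_
    have h3 : ‖x‖ ≤ |R| := le_trans h (le_abs_self R)
    have := hnn x
    nlinarith [norm_nonneg y]

lemma aux_young {N : ℕ} {G : Euc N → ℝ}
    (hnn : ∀ x, 0 ≤ G x)
    (hco : ∀ C : ℝ, ∃ R : ℝ, ∀ x : Euc N, R ≤ ‖x‖ → C * ‖x‖ ≤ G x) (x y : Euc N) :
    (inner ℝ x y : ℝ) - G x ≤ fenchelConj G y :=
  le_ciSup (aux_conj_bdd hnn hco y) x

lemma aux_conj_nonneg {N : ℕ} {G : Euc N → ℝ} (h0 : G 0 = 0)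
    (hnn : ∀ x, 0 ≤ G x)
    (hco : ∀ C : ℝ, ∃ R : ℝ, ∀ x : Euc N, R ≤ ‖x‖ → C * ‖x‖ ≤ G x) (y : Euc N) :
    0 ≤ fenchelConj G y := by
  have := aux_young hnn hco 0 y
  simpa [h0] using this

lemma aux_conj_grad_le {N : ℕ} {G : Euc N → ℝ}
    (hc : ConvexOn ℝ Set.univ G) (hnn : ∀ x, 0 ≤ G x)
    {g v : Euc N} (hg : HasGradientAt G g v) :
    fenchelConj G g ≤ G ((2:ℝ) • v) := by
  refine ciSup_le fun x => ?_
  have h1 := aux_subgrad hc hg x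
  have h2 := aux_subgrad hc hg ((2:ℝ) • v)
  have h3 : ((2:ℝ) • v - v) = v := by
    rw [two_smul]; abel
  rw [h3] at h2
  have h4 : (inner ℝ x g : ℝ) - G x ≤ (inner ℝ g v : ℝ) - G v := by
    have : (inner ℝ g (x - v) : ℝ) = (inner ℝ g x : ℝ) - (inner ℝ g v : ℝ) := by
      rw [inner_sub_right]
    rw [this] at h1
    rw [real_inner_comm]
    linarith
  have := hnn v
  linarith

lemma aux_delta2_global {N : ℕ} {G : Euc N → ℝ} (hGcont : Continuous G)
    (hnn : ∀ x, 0 ≤ G x) {K₁ M₁ : ℝ} (hK : 2 ≤ K₁)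
    (hΔ : ∀ x : Euc N, M₁ ≤ ‖x‖ → G ((2:ℝ) • x) ≤ K₁ * G x) :
    ∃ C₀ : ℝ, 0 ≤ C₀ ∧ ∀ x : Euc N, G ((2:ℝ) • x) ≤ K₁ * G x + C₀ := by
  obtain ⟨C, hC⟩ := (isCompact_closedBall (0 : Euc N) M₁).exists_bound_of_continuousOn
    ((hGcont.comp (continuous_const_smul (2:ℝ))).continuousOn)
  refine ⟨max C 0, le_max_right _ _, fun x => ?_⟩
  rcases le_total ‖x‖ M₁ with h | h
  · have h1 := hC x (by simpa [Metric.mem_closedBall, dist_eq_norm] using h)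
    have h2 : G ((2:ℝ) • x) ≤ C := le_trans (le_abs_self _) (by simpa using h1)
    have h3 : 0 ≤ K₁ * G x := mul_nonneg (by linarith) (hnn x)
    have := le_max_left C 0
    linarith
  · have h1 := hΔ x h
    have := le_max_right C 0
    linarith


set_option maxHeartbeats 2000000 in
/-- Directional derivative of the principal part for a general
Lagrangian F satisfying the growth conditions (F2)-(F4). -/
theorem principal_part_general {N : ℕ} (hN : 1 ≤ N) (G : Euc N → ℝ)
    (hG : IsGFunction G) (G' : Euc N → Euc N)
    (hG' : ∀ x, HasGradientAt G (G' x) x) (hG'cont : Continuous G')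
    (a b : ℝ) (hab : a < b)
    (F : ℝ → Euc N → Euc N → ℝ)
    (hFC1 : ContDiff ℝ 1 (fun p : ℝ × Euc N × Euc N => F p.1 p.2.1 p.2.2))
    (Fx Fv : ℝ → Euc N → Euc N → Euc N)
    (hFx : ∀ t x v, HasGradientAt (fun x' => F t x' v) (Fx t x v) x)
    (hFv : ∀ t x v, HasGradientAt (fun v' => F t x v') (Fv t x v) v)
    (aa : ℝ → ℝ) (haacont : Continuous aa) (haapos : ∀ s : ℝ, 0 ≤ s → 0 ≤ aa s)
    (bb cc : ℝ → ℝ)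
    (hbb : IntegrableOn bb (Icc a b)) (hbbpos : ∀ t ∈ Icc a b, 0 ≤ bb t)
    (hcc : IntegrableOn cc (Icc a b)) (hccpos : ∀ t ∈ Icc a b, 0 ≤ cc t)
    (hF2 : ∀ t ∈ Icc a b, ∀ x v : Euc N, |F t x v| ≤ aa ‖x‖ * (bb t + G v))
    (hF3 : ∀ t ∈ Icc a b, ∀ x v : Euc N, ‖Fx t x v‖ ≤ aa ‖x‖ * (bb t + G v))
    (hF4 : ∀ t ∈ Icc a b, ∀ x v : Euc N,
      fenchelConj G (Fv t x v) ≤ aa ‖x‖ * (cc t + fenchelConj G (G' v)))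
    (u du φ dφ : ℝ → Euc N)
    (hu : ∀ t ∈ Icc a b, u t = u a + ∫ s in a..t, du s)
    (hφ : ∀ t ∈ Icc a b, φ t = φ a + ∫ s in a..t, dφ s)
    (hMu : MemLG G (Icc a b) u) (hMdu : MemLG G (Icc a b) du)
    (hMφ : MemLG G (Icc a b) φ) (hMdφ : MemLG G (Icc a b) dφ)
    (hdu : IntegrableOn du (Icc a b)) (hdφ : IntegrableOn dφ (Icc a b)) :
    (∀ s ∈ Icc (-1 : ℝ) 1,
      IntegrableOn (fun t => F t (u t + s • φ t) (du t + s • dφ t)) (Icc a b)) ∧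
    IntegrableOn (fun t => (inner ℝ (Fx t (u t) (du t)) (φ t) : ℝ)) (Icc a b) ∧
    IntegrableOn (fun t => (inner ℝ (Fv t (u t) (du t)) (dφ t) : ℝ)) (Icc a b) ∧
    HasDerivAt
      (fun s : ℝ => ∫ t in Icc a b, F t (u t + s • φ t) (du t + s • dφ t))
      (∫ t in Icc a b,
        ((inner ℝ (Fx t (u t) (du t)) (φ t) : ℝ) +
         (inner ℝ (Fv t (u t) (du t)) (dφ t) : ℝ))) 0 := by
  obtain ⟨hG0, hGconv, hGeven, hGco, ⟨K₁, hK₁, M₁, hM₁, hΔ⟩, -⟩ := hG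
  have hGcont : Continuous G :=
    continuous_iff_continuousAt.2 fun x => (hG' x).differentiableAt.continuousAt
  have hGnn : ∀ x, 0 ≤ G x := aux_Gnonneg hG0 hGconv hGeven
  obtain ⟨C₀, hC₀, hΔg⟩ := aux_delta2_global hGcont hGnn hK₁ hΔ
  have hK₁0 : (0:ℝ) < K₁ := by linarith
  have habI : a ∈ Icc a b := ⟨le_refl a, hab.le⟩
  -- continuity and boundedness of u and φ on [a,b]
  have hucont : ContinuousOn u (Icc a b) := by
    have h1 : ContinuousOn (fun t => u a + ∫ s in a..t, du s) (Icc a b) := by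
      refine continuousOn_const.add ?_
      have h2 : IntegrableOn du (uIcc a b) := by rwa [uIcc_of_le hab.le]
      have := intervalIntegral.continuousOn_primitive_interval h2
      rwa [uIcc_of_le hab.le] at this
    exact h1.congr fun t ht => hu t ht
  have hφcont : ContinuousOn φ (Icc a b) := by
    have h1 : ContinuousOn (fun t => φ a + ∫ s in a..t, dφ s) (Icc a b) := by
      refine continuousOn_const.add ?_
      have h2 : IntegrableOn dφ (uIcc a b) := by rwa [uIcc_of_le hab.le]
      have := intervalIntegral.continuousOn_primitive_interval h2
      rwa [uIcc_of_le hab.le] at this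
    exact h1.congr fun t ht => hφ t ht
  obtain ⟨Ru, hRu⟩ := isCompact_Icc.exists_bound_of_continuousOn hucont
  obtain ⟨Rφ, hRφ⟩ := isCompact_Icc.exists_bound_of_continuousOn hφcont
  have hRu0 : 0 ≤ Ru := le_trans (norm_nonneg _) (hRu a habI)
  have hRφ0 : 0 ≤ Rφ := le_trans (norm_nonneg _) (hRφ a habI)
  obtain ⟨A, hA⟩ := (isCompact_Icc (a := (0:ℝ)) (b := Ru + Rφ)).exists_bound_of_continuousOn
    haacont.continuousOn
  have hA0 : 0 ≤ A := le_trans (norm_nonneg (aa 0)) (hA 0 ⟨le_refl 0, by linarith⟩)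
  have haaA : ∀ s : ℝ, |s| ≤ 1 → ∀ t ∈ Icc a b, aa ‖u t + s • φ t‖ ≤ A := by
    intro s hs t ht
    have hsm : ‖s • φ t‖ = |s| * ‖φ t‖ := by rw [norm_smul, Real.norm_eq_abs]
    have hn : ‖u t + s • φ t‖ ∈ Icc (0:ℝ) (Ru + Rφ) := by
      refine ⟨norm_nonneg _, ?_⟩
      have h1 := norm_add_le (u t) (s • φ t)
      have h2 := hRu t ht
      have h3 := hRφ t ht
      have h4 := norm_nonneg (φ t)
      nlinarith [abs_nonneg s]
    exact le_trans (le_abs_self _) (by simpa [Real.norm_eq_abs] using hA _ hn)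
  -- modular bounds
  have hGhalf : ∀ (s : ℝ), |s| ≤ 1 → ∀ p q : Euc N,
      G (p + s • q) ≤ (1/2) * G ((2:ℝ) • p) + (1/2) * G ((2:ℝ) • q) := by
    intro s hs p q
    have hcomb := hGconv.2 (mem_univ ((2:ℝ) • p)) (mem_univ (s • ((2:ℝ) • q)))
      (by norm_num : (0:ℝ) ≤ 1/2) (by norm_num : (0:ℝ) ≤ 1/2) (by norm_num)
    have heq : (1/2:ℝ) • ((2:ℝ) • p) + (1/2:ℝ) • (s • ((2:ℝ) • q)) = p + s • q := by
      module
    simp only [smul_eq_mul] at hcomb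
    rw [heq] at hcomb
    have h2 := aux_Gsmul_le hGconv hGeven hs ((2:ℝ) • q)
    linarith
  set Dfun : ℝ → ℝ := fun t => (K₁/2) * G (du t) + (K₁/2) * G (dφ t) + C₀ with hDfun
  have hDnn : ∀ t, 0 ≤ Dfun t := by
    intro t
    have := hGnn (du t); have := hGnn (dφ t)
    simp only [hDfun]
    nlinarith
  have hD : ∀ (s : ℝ), |s| ≤ 1 → ∀ t, G (du t + s • dφ t) ≤ Dfun t := by
    intro s hs t
    have h1 := hGhalf s hs (du t) (dφ t)
    have h2 := hΔg (du t)
    have h3 := hΔg (dφ t)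
    simp only [hDfun]
    linarith
  set Efun : ℝ → ℝ := fun t =>
    (K₁*K₁/2) * G (du t) + (K₁*K₁/2) * G (dφ t) + (K₁*C₀ + C₀) with hEfun
  have hE : ∀ (s : ℝ), |s| ≤ 1 → ∀ t, G ((2:ℝ) • (du t + s • dφ t)) ≤ Efun t := by
    intro s hs t
    have heq : (2:ℝ) • (du t + s • dφ t) = ((2:ℝ) • du t) + s • ((2:ℝ) • dφ t) := by
      module
    rw [heq]
    have h1 := hGhalf s hs ((2:ℝ) • du t) ((2:ℝ) • dφ t)
    have h2 := hΔg ((2:ℝ) • du t)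
    have h3 := hΔg ((2:ℝ) • dφ t)
    have h4 := hΔg (du t)
    have h5 := hΔg (dφ t)
    have h6 := hGnn (du t); have h7 := hGnn (dφ t)
    simp only [hEfun]
    nlinarith
  have hconst : IntegrableOn (fun _ : ℝ => (1:ℝ)) (Icc a b) :=
    integrableOn_const measure_Icc_lt_top.ne
  have hDint : IntegrableOn Dfun (Icc a b) := by
    simp only [hDfun]
    exact ((hMdu.2.const_mul _).add (hMdφ.2.const_mul _)).add
      (integrableOn_const measure_Icc_lt_top.ne)
  have hEint : IntegrableOn Efun (Icc a b) := by
    simp only [hEfun]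
    exact ((hMdu.2.const_mul _).add (hMdφ.2.const_mul _)).add
      (integrableOn_const measure_Icc_lt_top.ne)
  -- measurability
  have htriple : ∀ s : ℝ, AEStronglyMeasurable
      (fun t => ((t, u t + s • φ t, du t + s • dφ t) : ℝ × Euc N × Euc N))
      (volume.restrict (Icc a b)) := fun s =>
    aestronglyMeasurable_id.prodMk
      ((hMu.1.add (hMφ.1.const_smul s)).prodMk (hMdu.1.add (hMdφ.1.const_smul s)))
  have htriple0 : AEStronglyMeasurable
      (fun t => ((t, u t, du t) : ℝ × Euc N × Euc N)) (volume.restrict (Icc a b)) :=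
    aestronglyMeasurable_id.prodMk (hMu.1.prodMk hMdu.1)
  have hFmeas : ∀ s : ℝ, AEStronglyMeasurable
      (fun t => F t (u t + s • φ t) (du t + s • dφ t)) (volume.restrict (Icc a b)) :=
    fun s => hFC1.continuous.comp_aestronglyMeasurable (htriple s)
  -- Part 1
  have hpart1 : ∀ s ∈ Icc (-1:ℝ) 1,
      IntegrableOn (fun t => F t (u t + s • φ t) (du t + s • dφ t)) (Icc a b) := by
    intro s hs
    have hs1 : |s| ≤ 1 := abs_le.2 ⟨hs.1, hs.2⟩
    refine Integrable.mono' ((hbb.add hDint).const_mul A) (hFmeas s) ?_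
    filter_upwards [ae_restrict_mem measurableSet_Icc] with t ht
    rw [Real.norm_eq_abs]
    have h0 := hF2 t ht (u t + s • φ t) (du t + s • dφ t)
    have h1 := haaA s hs1 t ht
    have h2 := hD s hs1 t
    have h3 := hbbpos t ht
    have h4 := hGnn (du t + s • dφ t)
    have h5 : 0 ≤ aa ‖u t + s • φ t‖ := haapos _ (norm_nonneg _)
    have h6 : aa ‖u t + s • φ t‖ * (bb t + G (du t + s • dφ t)) ≤ A * (bb t + Dfun t) :=
      mul_le_mul h1 (by linarith) (by linarith) hA0
    exact le_trans h0 h6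
  -- fderiv decomposition
  set Ft := fun pp : ℝ × Euc N × Euc N => F pp.1 pp.2.1 pp.2.2 with hFt
  set L := fderiv ℝ Ft with hLdef
  have hLc : Continuous L := hFC1.continuous_fderiv one_ne_zero
  set jx : Euc N →L[ℝ] ℝ × Euc N × Euc N :=
    (0 : Euc N →L[ℝ] ℝ).prod ((ContinuousLinearMap.id ℝ (Euc N)).prod 0) with hjx
  set jv : Euc N →L[ℝ] ℝ × Euc N × Euc N :=
    (0 : Euc N →L[ℝ] ℝ).prod
      ((0 : Euc N →L[ℝ] Euc N).prod (ContinuousLinearMap.id ℝ (Euc N))) with hjv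
  have hLx : ∀ t x v, (InnerProductSpace.toDual ℝ (Euc N)) (Fx t x v) = (L (t,x,v)).comp jx := by
    intro t x v
    have hcurve : HasFDerivAt (fun x' : Euc N => ((t, x', v) : ℝ × Euc N × Euc N)) jx x :=
      (hasFDerivAt_const t x).prodMk ((hasFDerivAt_id x).prodMk (hasFDerivAt_const v x))
    exact (hFx t x v).hasFDerivAt.unique
      (by have h1 := (hFC1.differentiable one_ne_zero (t,x,v)).hasFDerivAt; exact h1.comp x hcurve)
  have hLv : ∀ t x v, (InnerProductSpace.toDual ℝ (Euc N)) (Fv t x v) = (L (t,x,v)).comp jv := by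
    intro t x v
    have hcurve : HasFDerivAt (fun v' : Euc N => ((t, x, v') : ℝ × Euc N × Euc N)) jv v :=
      (hasFDerivAt_const t v).prodMk ((hasFDerivAt_const x v).prodMk (hasFDerivAt_id v))
    exact (hFv t x v).hasFDerivAt.unique
      (by have h1 := (hFC1.differentiable one_ne_zero (t,x,v)).hasFDerivAt; exact h1.comp v hcurve)
  have hFxc : Continuous (fun p : ℝ × Euc N × Euc N => Fx p.1 p.2.1 p.2.2) := by
    have heq : (fun p : ℝ × Euc N × Euc N => Fx p.1 p.2.1 p.2.2)
        = fun p => (InnerProductSpace.toDual ℝ (Euc N)).symm ((L p).comp jx) := by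
      funext p
      rw [← hLx p.1 p.2.1 p.2.2]
      simp
    rw [heq]
    exact (LinearIsometryEquiv.continuous _).comp (hLc.clm_comp continuous_const)
  have hFvc : Continuous (fun p : ℝ × Euc N × Euc N => Fv p.1 p.2.1 p.2.2) := by
    have heq : (fun p : ℝ × Euc N × Euc N => Fv p.1 p.2.1 p.2.2)
        = fun p => (InnerProductSpace.toDual ℝ (Euc N)).symm ((L p).comp jv) := by
      funext p
      rw [← hLv p.1 p.2.1 p.2.2]
      simp
    rw [heq]
    exact (LinearIsometryEquiv.continuous _).comp (hLc.clm_comp continuous_const)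
  -- Part 2
  have hFxm : AEStronglyMeasurable (fun t => (inner ℝ (Fx t (u t) (du t)) (φ t) : ℝ))
      (volume.restrict (Icc a b)) :=
    (hFxc.comp_aestronglyMeasurable htriple0).inner hMφ.1
  have hpart2 : IntegrableOn (fun t => (inner ℝ (Fx t (u t) (du t)) (φ t) : ℝ)) (Icc a b) := by
    refine Integrable.mono' (((hbb.add hMdu.2).const_mul A).mul_const Rφ) hFxm ?_
    filter_upwards [ae_restrict_mem measurableSet_Icc] with t ht
    rw [Real.norm_eq_abs]
    have h1 : |(inner ℝ (Fx t (u t) (du t)) (φ t) : ℝ)| ≤ ‖Fx t (u t) (du t)‖ * ‖φ t‖ :=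
      abs_real_inner_le_norm _ _
    have h2 := hF3 t ht (u t) (du t)
    have h3 : aa ‖u t‖ ≤ A := by simpa using haaA 0 (by norm_num) t ht
    have h4 := hbbpos t ht
    have h5 := hGnn (du t)
    have h6 := hRφ t ht
    have h7 : 0 ≤ aa ‖u t‖ := haapos _ (norm_nonneg _)
    have h8 : ‖Fx t (u t) (du t)‖ ≤ A * (bb t + G (du t)) :=
      le_trans h2 (mul_le_mul_of_nonneg_right h3 (by linarith))
    have h9 : ‖Fx t (u t) (du t)‖ * ‖φ t‖ ≤ (A * (bb t + G (du t))) * Rφ :=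
      mul_le_mul h8 h6 (norm_nonneg _) (mul_nonneg hA0 (by linarith))
    exact le_trans h1 h9
  -- Young-type inequality
  have hYoung : ∀ y z : Euc N, |(inner ℝ y z : ℝ)| ≤ G z + fenchelConj G y := by
    intro y z
    have h1 : (inner ℝ z y : ℝ) - G z ≤ fenchelConj G y := aux_young hGnn hGco z y
    have h2 : (inner ℝ (-z) y : ℝ) - G (-z) ≤ fenchelConj G y := aux_young hGnn hGco (-z) y
    rw [inner_neg_left, hGeven z] at h2
    have hc : (inner ℝ y z : ℝ) = inner ℝ z y := real_inner_comm z y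
    rw [hc, abs_le]
    constructor <;> linarith
  have hconjFv : ∀ s : ℝ, |s| ≤ 1 → ∀ t ∈ Icc a b,
      fenchelConj G (Fv t (u t + s • φ t) (du t + s • dφ t)) ≤ A * (cc t + Efun t) := by
    intro s hs t ht
    have h1 := hF4 t ht (u t + s • φ t) (du t + s • dφ t)
    have h2 : fenchelConj G (G' (du t + s • dφ t)) ≤ G ((2:ℝ) • (du t + s • dφ t)) :=
      aux_conj_grad_le hGconv hGnn (hG' _)
    have h3 := hE s hs t
    have h4 := haaA s hs t ht
    have h5 := hccpos t ht
    have h6 : 0 ≤ fenchelConj G (G' (du t + s • dφ t)) := aux_conj_nonneg hG0 hGnn hGco _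
    have h7 : 0 ≤ aa ‖u t + s • φ t‖ := haapos _ (norm_nonneg _)
    exact le_trans h1 (mul_le_mul h4 (by linarith) (by linarith) hA0)
  -- Part 3
  have hFvm : AEStronglyMeasurable (fun t => (inner ℝ (Fv t (u t) (du t)) (dφ t) : ℝ))
      (volume.restrict (Icc a b)) :=
    (hFvc.comp_aestronglyMeasurable htriple0).inner hMdφ.1
  have hpart3 : IntegrableOn (fun t => (inner ℝ (Fv t (u t) (du t)) (dφ t) : ℝ)) (Icc a b) := by
    refine Integrable.mono' (hMdφ.2.add ((hcc.add hEint).const_mul A)) hFvm ?_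
    filter_upwards [ae_restrict_mem measurableSet_Icc] with t ht
    rw [Real.norm_eq_abs]
    have h1 := hYoung (Fv t (u t) (du t)) (dφ t)
    have h2 : fenchelConj G (Fv t (u t) (du t)) ≤ A * (cc t + Efun t) := by
      have := hconjFv 0 (by norm_num) t ht
      simpa using this
    simp only [Pi.add_apply]
    linarith
  refine ⟨hpart1, hpart2, hpart3, ?_⟩
  -- Part 4: differentiation under the integral sign
  have hkey : ∀ (t s : ℝ), HasDerivAt (fun s : ℝ => F t (u t + s • φ t) (du t + s • dφ t))
      ((inner ℝ (Fx t (u t + s • φ t) (du t + s • dφ t)) (φ t) : ℝ) +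
       (inner ℝ (Fv t (u t + s • φ t) (du t + s • dφ t)) (dφ t) : ℝ)) s := by
    intro t s
    have hc : HasDerivAt (fun s : ℝ => ((t, u t + s • φ t, du t + s • dφ t) : ℝ × Euc N × Euc N))
        ((0 : ℝ), φ t, dφ t) s := by
      refine (hasDerivAt_const s t).prodMk (HasDerivAt.prodMk ?_ ?_)
      · simpa using ((hasDerivAt_id s).smul_const (φ t)).const_add (u t)
      · simpa using ((hasDerivAt_id s).smul_const (dφ t)).const_add (du t)
    have hL : HasFDerivAt Ft (L (t, u t + s • φ t, du t + s • dφ t))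
        (t, u t + s • φ t, du t + s • dφ t) := (hFC1.differentiable one_ne_zero _).hasFDerivAt
    have hcomp := hL.comp_hasDerivAt s hc
    have hval : (L (t, u t + s • φ t, du t + s • dφ t)) ((0 : ℝ), φ t, dφ t)
        = (inner ℝ (Fx t (u t + s • φ t) (du t + s • dφ t)) (φ t) : ℝ) +
          (inner ℝ (Fv t (u t + s • φ t) (du t + s • dφ t)) (dφ t) : ℝ) := by
      have hsplit : ((0 : ℝ), φ t, dφ t) = jx (φ t) + jv (dφ t) := by
        simp [hjx, hjv, Prod.ext_iff]
      rw [hsplit, map_add]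
      have h1 : (L (t, u t + s • φ t, du t + s • dφ t)) (jx (φ t))
          = (inner ℝ (Fx t (u t + s • φ t) (du t + s • dφ t)) (φ t) : ℝ) := by
        have := congrArg (fun (T : Euc N →L[ℝ] ℝ) => T (φ t))
          (hLx t (u t + s • φ t) (du t + s • dφ t))
        simpa [InnerProductSpace.toDual_apply_apply] using this.symm
      have h2 : (L (t, u t + s • φ t, du t + s • dφ t)) (jv (dφ t))
          = (inner ℝ (Fv t (u t + s • φ t) (du t + s • dφ t)) (dφ t) : ℝ) := by
        have := congrArg (fun (T : Euc N →L[ℝ] ℝ) => T (dφ t))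
          (hLv t (u t + s • φ t) (du t + s • dφ t))
        simpa [InnerProductSpace.toDual_apply_apply] using this.symm
      rw [h1, h2]
    rw [hval] at hcomp
    exact hcomp
  have hF'meas : AEStronglyMeasurable
      (fun t => (inner ℝ (Fx t (u t + (0:ℝ) • φ t) (du t + (0:ℝ) • dφ t)) (φ t) : ℝ) +
        (inner ℝ (Fv t (u t + (0:ℝ) • φ t) (du t + (0:ℝ) • dφ t)) (dφ t) : ℝ))
      (volume.restrict (Icc a b)) :=
    ((hFxc.comp_aestronglyMeasurable (htriple 0)).inner hMφ.1).add
      ((hFvc.comp_aestronglyMeasurable (htriple 0)).inner hMdφ.1)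
  have hbound_int : Integrable
      (fun t => A * (bb t + Dfun t) * Rφ + (G (dφ t) + A * (cc t + Efun t)))
      (volume.restrict (Icc a b)) :=
    (((hbb.add hDint).const_mul A).mul_const Rφ).add
      (hMdφ.2.add ((hcc.add hEint).const_mul A))
  have h_bound : ∀ᵐ t ∂(volume.restrict (Icc a b)), ∀ s ∈ Metric.ball (0:ℝ) 1,
      ‖(inner ℝ (Fx t (u t + s • φ t) (du t + s • dφ t)) (φ t) : ℝ) +
        (inner ℝ (Fv t (u t + s • φ t) (du t + s • dφ t)) (dφ t) : ℝ)‖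
      ≤ A * (bb t + Dfun t) * Rφ + (G (dφ t) + A * (cc t + Efun t)) := by
    filter_upwards [ae_restrict_mem measurableSet_Icc] with t ht s hs
    have hs1 : |s| ≤ 1 := le_of_lt (by simpa [Real.norm_eq_abs] using mem_ball_zero_iff.1 hs)
    rw [Real.norm_eq_abs]
    have hxv := abs_real_inner_le_norm (Fx t (u t + s • φ t) (du t + s • dφ t)) (φ t)
    have h2 := hF3 t ht (u t + s • φ t) (du t + s • dφ t)
    have h3 := haaA s hs1 t ht
    have h4 := hD s hs1 t
    have h5 := hbbpos t ht
    have h6 := hGnn (du t + s • dφ t)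
    have h7 : 0 ≤ aa ‖u t + s • φ t‖ := haapos _ (norm_nonneg _)
    have h8 : ‖Fx t (u t + s • φ t) (du t + s • dφ t)‖ ≤ A * (bb t + Dfun t) :=
      le_trans h2 (mul_le_mul h3 (by linarith) (by linarith) hA0)
    have h9 : |(inner ℝ (Fx t (u t + s • φ t) (du t + s • dφ t)) (φ t) : ℝ)|
        ≤ A * (bb t + Dfun t) * Rφ :=
      le_trans hxv (mul_le_mul h8 (hRφ t ht) (norm_nonneg _)
        (mul_nonneg hA0 (by linarith [hDnn t])))
    have h10 : |(inner ℝ (Fv t (u t + s • φ t) (du t + s • dφ t)) (dφ t) : ℝ)|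
        ≤ G (dφ t) + A * (cc t + Efun t) := by
      have ha1 := hYoung (Fv t (u t + s • φ t) (du t + s • dφ t)) (dφ t)
      have ha2 := hconjFv s hs1 t ht
      linarith
    calc |(inner ℝ (Fx t (u t + s • φ t) (du t + s • dφ t)) (φ t) : ℝ) +
        (inner ℝ (Fv t (u t + s • φ t) (du t + s • dφ t)) (dφ t) : ℝ)|
        ≤ |(inner ℝ (Fx t (u t + s • φ t) (du t + s • dφ t)) (φ t) : ℝ)| +
          |(inner ℝ (Fv t (u t + s • φ t) (du t + s • dφ t)) (dφ t) : ℝ)| := abs_add_le _ _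
      _ ≤ A * (bb t + Dfun t) * Rφ + (G (dφ t) + A * (cc t + Efun t)) := by linarith
  obtain ⟨-, hder⟩ := hasDerivAt_integral_of_dominated_loc_of_deriv_le
    (F := fun s : ℝ => fun t => F t (u t + s • φ t) (du t + s • dφ t))
    (F' := fun s : ℝ => fun t =>
      (inner ℝ (Fx t (u t + s • φ t) (du t + s • dφ t)) (φ t) : ℝ) +
      (inner ℝ (Fv t (u t + s • φ t) (du t + s • dφ t)) (dφ t) : ℝ))
    (x₀ := (0:ℝ)) (s := Metric.ball (0:ℝ) 1) (Metric.ball_mem_nhds _ one_pos)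
    (Eventually.of_forall hFmeas)
    (hpart1 0 ⟨by norm_num, by norm_num⟩)
    hF'meas h_bound hbound_int
    (Eventually.of_forall fun t => fun s _ => hkey t s)
  have heq : (∫ t in Icc a b,
      ((inner ℝ (Fx t (u t) (du t)) (φ t) : ℝ) + (inner ℝ (Fv t (u t) (du t)) (dφ t) : ℝ)))
      = ∫ t in Icc a b,
        ((inner ℝ (Fx t (u t + (0:ℝ) • φ t) (du t + (0:ℝ) • dφ t)) (φ t) : ℝ) +
         (inner ℝ (Fv t (u t + (0:ℝ) • φ t) (du t + (0:ℝ) • dφ t)) (dφ t) : ℝ)) := by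
    congr 1
    funext t
    simp
  rw [heq]
  exact hder
end
end
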